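/- arXiv:1903.03395 — 3 statements merged into one kernel-verified Lean document; each statement's English description precedes it below -/
import Mathlib

section
/- For any classical-classical-quantum multiple access channel family 𝐖 = {W^k : X^k × Y^k → S((ℂ^d)^{⊗k})}_{k∈ℕ} (not necessarily discrete and memoryless), every transmission rate pair achievable with stochastic encoders is an achievable simultaneous identification rate pair: C_st(𝐖) ⊆ C_id^sim(𝐖). -/
open Matrix BigOperators
open scoped ComplexOrder

/-- A probability distribution on a finite set. -/
def IsProbDist {α : Type} [Fintype α] (P : α → ℝ) : Prop :=
  (∀ a, 0 ≤ P a) ∧ ∑ a, P a = 1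

/-- Success probability of a pair of stochastic encoders `P`, `Q` and a decoding
operator `D` over a channel output map `W`. -/
noncomputable def succProb {X Y n : Type} [Fintype X] [Fintype Y] [Fintype n]
    [DecidableEq n] (P : X → ℝ) (Q : Y → ℝ) (D : Matrix n n ℂ)
    (W : X → Y → Matrix n n ℂ) : ℝ :=
  ∑ x, ∑ y, P x * Q y * ((D * W x y).trace).re

/-- `(R₁, R₂)` is an achievable transmission rate pair, with stochastic encoders and
maximal error, for the CCQ channel family `W`. -/
def AchievableRatePairSt {X Y : Type} [Fintype X] [Fintype Y] (d : ℕ)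
    (W : (k : ℕ) → (Fin k → X) → (Fin k → Y) →
      Matrix (Fin k → Fin d) (Fin k → Fin d) ℂ) (R₁ R₂ : ℝ) : Prop :=
  0 ≤ R₁ ∧ 0 ≤ R₂ ∧
  ∀ ε : ℝ, 0 < ε → ∀ δ : ℝ, 0 < δ → ∃ k₀ : ℕ, ∀ k : ℕ, k₀ ≤ k →
    ∃ (M N : ℕ) (P : Fin M → (Fin k → X) → ℝ) (Q : Fin N → (Fin k → Y) → ℝ)
      (D : Fin M → Fin N → Matrix (Fin k → Fin d) (Fin k → Fin d) ℂ),
      (∀ m, IsProbDist (P m)) ∧ (∀ n, IsProbDist (Q n)) ∧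
      (∀ m n, (D m n).PosSemidef) ∧
      (∑ m, ∑ n, D m n = (1 : Matrix (Fin k → Fin d) (Fin k → Fin d) ℂ)) ∧
      R₁ - δ ≤ Real.logb 2 (M : ℝ) / (k : ℝ) ∧
      R₂ - δ ≤ Real.logb 2 (N : ℝ) / (k : ℝ) ∧
      (∀ m n, 1 - succProb (P m) (Q n) (D m n) (W k) ≤ ε)

/-- Transmission capacity region (stochastic encoders, maximal error). -/
def Cst {X Y : Type} [Fintype X] [Fintype Y] (d : ℕ)
    (W : (k : ℕ) → (Fin k → X) → (Fin k → Y) →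
      Matrix (Fin k → Fin d) (Fin k → Fin d) ℂ) : Set (ℝ × ℝ) :=
  {p | AchievableRatePairSt d W p.1 p.2}

/-- `(R₁, R₂)` is an achievable simultaneous identification rate pair for the CCQ
channel family `W`. -/
def AchievableRatePairIDSim {X Y : Type} [Fintype X] [Fintype Y] (d : ℕ)
    (W : (k : ℕ) → (Fin k → X) → (Fin k → Y) →
      Matrix (Fin k → Fin d) (Fin k → Fin d) ℂ) (R₁ R₂ : ℝ) : Prop :=
  0 ≤ R₁ ∧ 0 ≤ R₂ ∧
  ∀ ε₁ : ℝ, 0 < ε₁ → ∀ ε₂ : ℝ, 0 < ε₂ → ∀ δ : ℝ, 0 < δ →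
    ∃ k₀ : ℕ, ∀ k : ℕ, k₀ ≤ k →
    ∃ (M N : ℕ) (P : Fin M → (Fin k → X) → ℝ) (Q : Fin N → (Fin k → Y) → ℝ)
      (I : Fin M → Fin N → Matrix (Fin k → Fin d) (Fin k → Fin d) ℂ),
      (∀ m, IsProbDist (P m)) ∧ (∀ n, IsProbDist (Q n)) ∧
      (∀ m n, (I m n).PosSemidef ∧
        ((1 : Matrix (Fin k → Fin d) (Fin k → Fin d) ℂ) - I m n).PosSemidef) ∧
      -- simultaneity: all the `I m n` arise from a single common POVM
      (∃ (R S : ℕ) (E : Fin R → Fin S → Matrix (Fin k → Fin d) (Fin k → Fin d) ℂ)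
        (A : Fin M → Finset (Fin R)) (B : Fin N → Finset (Fin S)),
        (∀ r s, (E r s).PosSemidef) ∧
        (∑ r, ∑ s, E r s = (1 : Matrix (Fin k → Fin d) (Fin k → Fin d) ℂ)) ∧
        (∀ m n, I m n = ∑ r ∈ A m, ∑ s ∈ B n, E r s)) ∧
      R₁ - δ ≤ Real.logb 2 (Real.logb 2 (M : ℝ)) / (k : ℝ) ∧
      R₂ - δ ≤ Real.logb 2 (Real.logb 2 (N : ℝ)) / (k : ℝ) ∧
      (∀ m n, 1 - succProb (P m) (Q n) (I m n) (W k) ≤ ε₁) ∧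
      (∀ m n m' n', (m, n) ≠ (m', n') →
        succProb (P m) (Q n) (I m' n') (W k) ≤ ε₂)

/-- Simultaneous identification capacity region. -/
def CidSim {X Y : Type} [Fintype X] [Fintype Y] (d : ℕ)
    (W : (k : ℕ) → (Fin k → X) → (Fin k → Y) →
      Matrix (Fin k → Fin d) (Fin k → Fin d) ℂ) : Set (ℝ × ℝ) :=
  {p | AchievableRatePairIDSim d W p.1 p.2}

/-! ### Auxiliary lemmas -/

section Aux

lemma psd_trace_nonneg {ι : Type} [Fintype ι] [DecidableEq ι]
    {A : Matrix ι ι ℂ} (hA : A.PosSemidef) : 0 ≤ A.trace := by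
  rw [Matrix.trace]
  refine Finset.sum_nonneg fun i _ => ?_
  exact hA.diag_nonneg

lemma trace_mul_nonneg {ι : Type} [Fintype ι] [DecidableEq ι]
    {A B : Matrix ι ι ℂ} (hA : A.PosSemidef) (hB : B.PosSemidef) :
    0 ≤ (A * B).trace := by
  obtain ⟨C, rfl⟩ : ∃ C : Matrix ι ι ℂ, A = Cᴴ * C := by
    open scoped MatrixOrder Matrix.Norms.L2Operator in
    exact CStarAlgebra.nonneg_iff_eq_star_mul_self.mp hA.nonneg
  rw [Matrix.mul_assoc, Matrix.trace_mul_comm]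
  exact psd_trace_nonneg (hB.mul_mul_conjTranspose_same C)

lemma trace_mul_re_nonneg {ι : Type} [Fintype ι] [DecidableEq ι]
    {A B : Matrix ι ι ℂ} (hA : A.PosSemidef) (hB : B.PosSemidef) :
    0 ≤ ((A * B).trace).re :=
  (Complex.le_def.mp (trace_mul_nonneg hA hB)).1

lemma psd_finset_sum {ι γ : Type} [Fintype ι] (s : Finset γ)
    (f : γ → Matrix ι ι ℂ) (hf : ∀ i ∈ s, (f i).PosSemidef) :
    (∑ i ∈ s, f i).PosSemidef := by
  classical
  induction s using Finset.induction with
  | empty => simpa using Matrix.PosSemidef.zero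
  | insert _ _ hx ih =>
      rw [Finset.sum_insert hx]
      exact Matrix.PosSemidef.add (hf _ (Finset.mem_insert_self _ _))
        (ih fun i hi => hf i (Finset.mem_insert_of_mem hi))

lemma sum_rot {γ₁ γ₂ γ₃ : Type*} {s₁ : Finset γ₁} {s₂ : Finset γ₂} {s₃ : Finset γ₃}
    (f : γ₁ → γ₂ → γ₃ → ℝ) :
    ∑ x ∈ s₁, ∑ y ∈ s₂, ∑ i ∈ s₃, f x y i = ∑ i ∈ s₃, ∑ x ∈ s₁, ∑ y ∈ s₂, f x y i :=
  calc ∑ x ∈ s₁, ∑ y ∈ s₂, ∑ i ∈ s₃, f x y i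
      = ∑ x ∈ s₁, ∑ i ∈ s₃, ∑ y ∈ s₂, f x y i :=
        Finset.sum_congr rfl fun _ _ => Finset.sum_comm
    _ = ∑ i ∈ s₃, ∑ x ∈ s₁, ∑ y ∈ s₂, f x y i := Finset.sum_comm

variable {α β ι : Type} [Fintype α] [Fintype β] [Fintype ι] [DecidableEq ι]

lemma succProb_sum_D {γ : Type} (s : Finset γ) (P : α → ℝ) (Q : β → ℝ)
    (D : γ → Matrix ι ι ℂ) (W : α → β → Matrix ι ι ℂ) :
    succProb P Q (∑ i ∈ s, D i) W = ∑ i ∈ s, succProb P Q (D i) W := by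
  unfold succProb
  simp only [Finset.sum_mul, Matrix.trace_sum, Complex.re_sum, Finset.mul_sum]
  exact sum_rot _

lemma succProb_sum_P {γ : Type} (s : Finset γ) (c : γ → ℝ) (P : γ → α → ℝ)
    (Q : β → ℝ) (D : Matrix ι ι ℂ) (W : α → β → Matrix ι ι ℂ) :
    succProb (fun x => ∑ m ∈ s, c m * P m x) Q D W
      = ∑ m ∈ s, c m * succProb (P m) Q D W := by
  unfold succProb
  simp only [Finset.sum_mul, Finset.mul_sum]
  rw [sum_rot]
  exact Finset.sum_congr rfl fun i _ => Finset.sum_congr rfl fun x _ =>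
    Finset.sum_congr rfl fun y _ => by ring

lemma succProb_sum_Q {γ : Type} (s : Finset γ) (c : γ → ℝ) (P : α → ℝ)
    (Q : γ → β → ℝ) (D : Matrix ι ι ℂ) (W : α → β → Matrix ι ι ℂ) :
    succProb P (fun y => ∑ n ∈ s, c n * Q n y) D W
      = ∑ n ∈ s, c n * succProb P (Q n) D W := by
  unfold succProb
  simp only [Finset.sum_mul, Finset.mul_sum]
  rw [sum_rot]
  exact Finset.sum_congr rfl fun i _ => Finset.sum_congr rfl fun x _ =>
    Finset.sum_congr rfl fun y _ => by ring

lemma succProb_nonneg {P : α → ℝ} {Q : β → ℝ} {D : Matrix ι ι ℂ}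
    {W : α → β → Matrix ι ι ℂ} (hP : ∀ x, 0 ≤ P x) (hQ : ∀ y, 0 ≤ Q y)
    (hD : D.PosSemidef) (hW : ∀ x y, (W x y).PosSemidef) :
    0 ≤ succProb P Q D W :=
  Finset.sum_nonneg fun x _ => Finset.sum_nonneg fun y _ =>
    mul_nonneg (mul_nonneg (hP x) (hQ y)) (trace_mul_re_nonneg hD (hW x y))

lemma succProb_one (P : α → ℝ) (Q : β → ℝ) (W : α → β → Matrix ι ι ℂ)
    (hP : ∑ x, P x = 1) (hQ : ∑ y, Q y = 1) (hW : ∀ x y, (W x y).trace = 1) :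
    succProb P Q (1 : Matrix ι ι ℂ) W = 1 := by
  unfold succProb
  simp only [Matrix.one_mul, hW, Complex.one_re, mul_one]
  rw [← Finset.sum_mul_sum, hP, hQ, mul_one]

end Aux

section Transform

variable {α β ι : Type} [Fintype α] [Fintype β] [Fintype ι] [DecidableEq ι]

lemma succProb_total {M N : ℕ} (P : α → ℝ) (Q : β → ℝ)
    (D : Fin M → Fin N → Matrix ι ι ℂ) (W : α → β → Matrix ι ι ℂ)
    (hP : ∑ x, P x = 1) (hQ : ∑ y, Q y = 1) (hW : ∀ x y, (W x y).trace = 1)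
    (hDsum : ∑ m, ∑ n, D m n = 1) :
    ∑ q : Fin M × Fin N, succProb P Q (D q.1 q.2) W = 1 := by
  rw [← Finset.univ_product_univ, Finset.sum_product]
  calc ∑ m, ∑ n, succProb P Q (D m n) W
      = ∑ m, succProb P Q (∑ n, D m n) W :=
        Finset.sum_congr rfl fun m _ => (succProb_sum_D _ _ _ _ _).symm
    _ = succProb P Q (∑ m, ∑ n, D m n) W := (succProb_sum_D _ _ _ _ _).symm
    _ = 1 := by rw [hDsum]; exact succProb_one P Q W hP hQ hW

theorem transform {M N M₁ N₁ : ℕ}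
    (W : α → β → Matrix ι ι ℂ)
    (hWp : ∀ x y, (W x y).PosSemidef) (hWt : ∀ x y, (W x y).trace = 1)
    (P : Fin M → α → ℝ) (Q : Fin N → β → ℝ) (D : Fin M → Fin N → Matrix ι ι ℂ)
    (hP : ∀ m, IsProbDist (P m)) (hQ : ∀ n, IsProbDist (Q n))
    (hD : ∀ m n, (D m n).PosSemidef)
    (hDsum : ∑ m, ∑ n, D m n = (1 : Matrix ι ι ℂ))
    (ε' : ℝ) (hε' : 0 ≤ ε')
    (herr : ∀ m n, 1 - succProb (P m) (Q n) (D m n) W ≤ ε')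
    (A : Fin M₁ → Finset (Fin M)) (B : Fin N₁ → Finset (Fin N))
    (hA : ∀ a, (A a).Nonempty) (hB : ∀ b, (B b).Nonempty)
    (εc : ℝ) (hεc : 0 ≤ εc)
    (hcross : ∀ a b a' b', (a, b) ≠ (a', b') →
      (((A a ∩ A a').card : ℝ) * ((B b ∩ B b').card : ℝ)) ≤
        εc * (((A a).card : ℝ) * ((B b).card : ℝ))) :
    ∃ (P' : Fin M₁ → α → ℝ) (Q' : Fin N₁ → β → ℝ)
      (I : Fin M₁ → Fin N₁ → Matrix ι ι ℂ),
      (∀ a, IsProbDist (P' a)) ∧ (∀ b, IsProbDist (Q' b)) ∧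
      (∀ a b, (I a b).PosSemidef ∧ ((1 : Matrix ι ι ℂ) - I a b).PosSemidef) ∧
      (∃ (R S : ℕ) (E : Fin R → Fin S → Matrix ι ι ℂ)
        (A' : Fin M₁ → Finset (Fin R)) (B' : Fin N₁ → Finset (Fin S)),
        (∀ r s, (E r s).PosSemidef) ∧
        (∑ r, ∑ s, E r s = (1 : Matrix ι ι ℂ)) ∧
        (∀ a b, I a b = ∑ r ∈ A' a, ∑ s ∈ B' b, E r s)) ∧
      (∀ a b, 1 - succProb (P' a) (Q' b) (I a b) W ≤ ε') ∧
      (∀ a b a' b', (a, b) ≠ (a', b') →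
        succProb (P' a) (Q' b) (I a' b') W ≤ ε' + εc) := by
  classical
  set cA : Fin M₁ → ℝ := fun a => (((A a).card : ℝ))⁻¹ with hcA
  set cB : Fin N₁ → ℝ := fun b => (((B b).card : ℝ))⁻¹ with hcB
  have hcApos : ∀ a, 0 < ((A a).card : ℝ) := fun a => by
    exact_mod_cast Finset.card_pos.mpr (hA a)
  have hcBpos : ∀ b, 0 < ((B b).card : ℝ) := fun b => by
    exact_mod_cast Finset.card_pos.mpr (hB b)
  have hcAnn : ∀ a, 0 ≤ cA a := fun a => inv_nonneg.mpr (hcApos a).le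
  have hcBnn : ∀ b, 0 ≤ cB b := fun b => inv_nonneg.mpr (hcBpos b).le
  have hcAsum : ∀ a, ∑ _m ∈ A a, cA a = 1 := fun a => by
    rw [Finset.sum_const, nsmul_eq_mul, hcA, mul_inv_cancel₀ (hcApos a).ne']
  have hcBsum : ∀ b, ∑ _n ∈ B b, cB b = 1 := fun b => by
    rw [Finset.sum_const, nsmul_eq_mul, hcB, mul_inv_cancel₀ (hcBpos b).ne']
  have key : ∀ a b a' b',
      succProb (fun x => ∑ m ∈ A a, cA a * P m x)
        (fun y => ∑ n ∈ B b, cB b * Q n y)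
        (∑ m ∈ A a', ∑ n ∈ B b', D m n) W
      = ∑ m ∈ A a, cA a * ∑ n ∈ B b, cB b *
          ∑ q ∈ A a' ×ˢ B b', succProb (P m) (Q n) (D q.1 q.2) W := by
    intro a b a' b'
    rw [succProb_sum_P (A a) (fun _ => cA a) P _ _ W]
    refine Finset.sum_congr rfl fun m _ => ?_
    rw [succProb_sum_Q (B b) (fun _ => cB b) (P m) Q _ W]
    refine congrArg _ (Finset.sum_congr rfl fun n _ => congrArg _ ?_)
    rw [succProb_sum_D (A a') (P m) (Q n) _ W]
    rw [Finset.sum_product]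
    exact Finset.sum_congr rfl fun m' _ => succProb_sum_D _ _ _ _ _
  have snn : ∀ (m : Fin M) (n : Fin N) (q : Fin M × Fin N),
      0 ≤ succProb (P m) (Q n) (D q.1 q.2) W := fun m n q =>
    succProb_nonneg (hP m).1 (hQ n).1 (hD q.1 q.2) hWp
  have stot : ∀ (m : Fin M) (n : Fin N),
      ∑ q : Fin M × Fin N, succProb (P m) (Q n) (D q.1 q.2) W = 1 :=
    fun m n => succProb_total (P m) (Q n) D W (hP m).2 (hQ n).2 hWt hDsum
  refine ⟨fun a x => ∑ m ∈ A a, cA a * P m x,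
          fun b y => ∑ n ∈ B b, cB b * Q n y,
          fun a b => ∑ m ∈ A a, ∑ n ∈ B b, D m n, ?_, ?_, ?_, ?_, ?_, ?_⟩
  · intro a
    constructor
    · intro x
      exact Finset.sum_nonneg fun m _ => mul_nonneg (hcAnn a) ((hP m).1 x)
    · rw [Finset.sum_comm]
      calc ∑ m ∈ A a, ∑ x, cA a * P m x
          = ∑ m ∈ A a, cA a := Finset.sum_congr rfl fun m _ => by
            rw [← Finset.mul_sum, (hP m).2, mul_one]
        _ = 1 := hcAsum a
  · intro b
    constructor
    · intro y
      exact Finset.sum_nonneg fun n _ => mul_nonneg (hcBnn b) ((hQ n).1 y)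
    · rw [Finset.sum_comm]
      calc ∑ n ∈ B b, ∑ y, cB b * Q n y
          = ∑ n ∈ B b, cB b := Finset.sum_congr rfl fun n _ => by
            rw [← Finset.mul_sum, (hQ n).2, mul_one]
        _ = 1 := hcBsum b
  · intro a b
    constructor
    · exact psd_finset_sum _ _ fun m _ => psd_finset_sum _ _ fun n _ => hD m n
    · have h1 : (1 : Matrix ι ι ℂ) = ∑ q : Fin M × Fin N, D q.1 q.2 := by
        rw [← hDsum, ← Finset.univ_product_univ, Finset.sum_product]
      have h2 : (∑ q ∈ A a ×ˢ B b, D q.1 q.2)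
          = ∑ m ∈ A a, ∑ n ∈ B b, D m n := by rw [Finset.sum_product]
      show ((1 : Matrix ι ι ℂ) - ∑ m ∈ A a, ∑ n ∈ B b, D m n).PosSemidef
      rw [h1, ← h2, ← Finset.sum_sdiff (Finset.subset_univ (A a ×ˢ B b)),
        add_sub_cancel_right]
      exact psd_finset_sum _ _ fun q _ => hD q.1 q.2
  · exact ⟨M, N, D, A, B, hD, hDsum, fun a b => rfl⟩
  · -- error of the first kind
    intro a b
    rw [sub_le_iff_le_add]
    have hmain : (1 : ℝ) - ε' ≤ succProb (fun x => ∑ m ∈ A a, cA a * P m x)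
        (fun y => ∑ n ∈ B b, cB b * Q n y)
        (∑ m ∈ A a, ∑ n ∈ B b, D m n) W := by
      rw [key a b a b]
      have hterm : ∀ m ∈ A a, ∀ n ∈ B b,
          (1 : ℝ) - ε' ≤ ∑ q ∈ A a ×ˢ B b, succProb (P m) (Q n) (D q.1 q.2) W := by
        intro m hm n hn
        have hmem : ((m, n) : Fin M × Fin N) ∈ A a ×ˢ B b :=
          Finset.mem_product.mpr ⟨hm, hn⟩
        have hsingle := Finset.single_le_sum
          (f := fun q : Fin M × Fin N => succProb (P m) (Q n) (D q.1 q.2) W)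
          (fun q _ => snn m n q) hmem
        have := herr m n
        linarith
      calc (1:ℝ) - ε' = ∑ m ∈ A a, cA a * ∑ n ∈ B b, cB b * (1 - ε') := by
            have hB1 : ∑ _n ∈ B b, cB b * (1 - ε') = 1 - ε' := by
              rw [← Finset.sum_mul, hcBsum b, one_mul]
            rw [hB1, ← Finset.sum_mul, hcAsum a, one_mul]
        _ ≤ _ := by
            refine Finset.sum_le_sum fun m hm => ?_
            refine mul_le_mul_of_nonneg_left ?_ (hcAnn a)
            refine Finset.sum_le_sum fun n hn => ?_
            exact mul_le_mul_of_nonneg_left (hterm m hm n hn) (hcBnn b)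
    linarith
  · -- error of the second kind
    intro a b a' b' hne
    rw [key a b a' b']
    have hub : ∀ m ∈ A a, ∀ n ∈ B b,
        ∑ q ∈ A a' ×ˢ B b', succProb (P m) (Q n) (D q.1 q.2) W
          ≤ ε' + (if m ∈ A a' then (1:ℝ) else 0) * (if n ∈ B b' then (1:ℝ) else 0) := by
      intro m hm n hn
      by_cases hmem : ((m, n) : Fin M × Fin N) ∈ A a' ×ˢ B b'
      · have h1 : ∑ q ∈ A a' ×ˢ B b', succProb (P m) (Q n) (D q.1 q.2) W ≤ 1 := by
          rw [← stot m n]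
          exact Finset.sum_le_sum_of_subset_of_nonneg (Finset.subset_univ _)
            (fun q _ _ => snn m n q)
        obtain ⟨hm', hn'⟩ := Finset.mem_product.mp hmem
        rw [if_pos hm', if_pos hn', mul_one]
        linarith
      · have hsub : A a' ×ˢ B b' ⊆ Finset.univ.erase ((m, n) : Fin M × Fin N) := by
          intro q hq
          refine Finset.mem_erase.mpr ⟨?_, Finset.mem_univ _⟩
          rintro rfl; exact hmem hq
        have h1 : ∑ q ∈ A a' ×ˢ B b', succProb (P m) (Q n) (D q.1 q.2) W
            ≤ ∑ q ∈ Finset.univ.erase ((m,n) : Fin M × Fin N),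
                succProb (P m) (Q n) (D q.1 q.2) W :=
          Finset.sum_le_sum_of_subset_of_nonneg hsub (fun q _ _ => snn m n q)
        have h2 := Finset.add_sum_erase Finset.univ
            (fun q : Fin M × Fin N => succProb (P m) (Q n) (D q.1 q.2) W)
            (Finset.mem_univ ((m,n) : Fin M × Fin N))
        rw [stot m n] at h2
        have h3 := herr m n
        have hif : 0 ≤ (if m ∈ A a' then (1:ℝ) else 0) * (if n ∈ B b' then (1:ℝ) else 0) := by
          positivity
        simp only at h1 h2
        linarith
    have hχB : ∑ n ∈ B b, (if n ∈ B b' then (1:ℝ) else 0) = ((B b ∩ B b').card : ℝ) := by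
      rw [Finset.sum_ite_mem, Finset.sum_const, nsmul_eq_mul, mul_one]
    have hχA : ∑ m ∈ A a, (if m ∈ A a' then (1:ℝ) else 0) = ((A a ∩ A a').card : ℝ) := by
      rw [Finset.sum_ite_mem, Finset.sum_const, nsmul_eq_mul, mul_one]
    have honeB : cB b * ((B b).card : ℝ) = 1 := inv_mul_cancel₀ (hcBpos b).ne'
    have honeA : cA a * ((A a).card : ℝ) = 1 := inv_mul_cancel₀ (hcApos a).ne'
    calc ∑ m ∈ A a, cA a * ∑ n ∈ B b, cB b *
          ∑ q ∈ A a' ×ˢ B b', succProb (P m) (Q n) (D q.1 q.2) W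
        ≤ ∑ m ∈ A a, cA a * ∑ n ∈ B b, cB b *
          (ε' + (if m ∈ A a' then (1:ℝ) else 0) * (if n ∈ B b' then (1:ℝ) else 0)) := by
          refine Finset.sum_le_sum fun m hm => ?_
          refine mul_le_mul_of_nonneg_left ?_ (hcAnn a)
          refine Finset.sum_le_sum fun n hn => ?_
          exact mul_le_mul_of_nonneg_left (hub m hm n hn) (hcBnn b)
      _ = ε' + (cA a * ((A a ∩ A a').card : ℝ)) * (cB b * ((B b ∩ B b').card : ℝ)) := by
          have hBsplit : ∀ m : Fin M, ∑ n ∈ B b, cB b *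
              (ε' + (if m ∈ A a' then (1:ℝ) else 0) * (if n ∈ B b' then (1:ℝ) else 0))
              = ε' + (if m ∈ A a' then (1:ℝ) else 0) * (cB b * ((B b ∩ B b').card : ℝ)) := by
            intro m
            rw [← Finset.mul_sum, Finset.sum_add_distrib, Finset.sum_const,
              ← Finset.mul_sum, hχB, nsmul_eq_mul]
            calc cB b * (((B b).card : ℝ) * ε'
                  + (if m ∈ A a' then (1:ℝ) else 0) * ((B b ∩ B b').card : ℝ))
                = (cB b * ((B b).card : ℝ)) * ε'
                  + (if m ∈ A a' then (1:ℝ) else 0) * (cB b * ((B b ∩ B b').card : ℝ)) := by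
                  ring
              _ = ε' + (if m ∈ A a' then (1:ℝ) else 0)
                  * (cB b * ((B b ∩ B b').card : ℝ)) := by rw [honeB, one_mul]
          rw [Finset.sum_congr rfl fun m _ => congrArg (cA a * ·) (hBsplit m)]
          rw [Finset.sum_congr rfl (fun m _ => show cA a * (ε' + (if m ∈ A a' then (1:ℝ) else 0)
              * (cB b * ((B b ∩ B b').card : ℝ))) = cA a * ε' + (if m ∈ A a' then (1:ℝ) else 0)
              * ((cB b * ((B b ∩ B b').card : ℝ)) * cA a) from by ring)]
          rw [Finset.sum_add_distrib, Finset.sum_const, ← Finset.sum_mul, hχA, nsmul_eq_mul]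
          calc ((A a).card : ℝ) * (cA a * ε')
                + ((A a ∩ A a').card : ℝ) * ((cB b * ((B b ∩ B b').card : ℝ)) * cA a)
              = (cA a * ((A a).card : ℝ)) * ε'
                + (cA a * ((A a ∩ A a').card : ℝ)) * (cB b * ((B b ∩ B b').card : ℝ)) := by
                ring
            _ = _ := by rw [honeA, one_mul]
      _ ≤ ε' + εc := by
          have hc := hcross a b a' b' hne
          have h4 : (cA a * ((A a ∩ A a').card : ℝ)) * (cB b * ((B b ∩ B b').card : ℝ))
              = (cA a * cB b) * (((A a ∩ A a').card : ℝ) * ((B b ∩ B b').card : ℝ)) := by ring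
          have h5 : (cA a * cB b) * (((A a ∩ A a').card : ℝ) * ((B b ∩ B b').card : ℝ))
              ≤ (cA a * cB b) * (εc * (((A a).card : ℝ) * ((B b).card : ℝ))) :=
            mul_le_mul_of_nonneg_left hc (mul_nonneg (hcAnn a) (hcBnn b))
          have h6 : (cA a * cB b) * (εc * (((A a).card : ℝ) * ((B b).card : ℝ)))
              = εc * ((cA a * ((A a).card : ℝ)) * (cB b * ((B b).card : ℝ))) := by ring
          rw [h4]
          rw [h6, honeA, honeB, mul_one, mul_one] at h5
          linarith

end Transform

section GV

lemma hamming_ball_card_le {n q : ℕ} (hq : 1 ≤ q) (c : Fin n → Fin q) (r : ℕ) :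
    (Finset.univ.filter fun y : Fin n → Fin q => hammingDist y c ≤ r).card
      ≤ 2 ^ n * q ^ r := by
  classical
  have hdist : ∀ y : Fin n → Fin q,
      hammingDist y c = (Finset.univ.filter fun i => y i ≠ c i).card := fun y => rfl
  set S' : (Fin n → Fin q) → Finset (Fin n) := fun y =>
    if (Finset.univ.filter fun i => y i ≠ c i).card ≤ r
    then (Finset.univ.filter fun i => y i ≠ c i) else ∅ with hS'
  have hS'card : ∀ y, (S' y).card ≤ r := by
    intro y
    simp only [hS']
    split_ifs with h
    · exact h
    · simp
  set f : (Fin n → Fin q) → Σ S : {S : Finset (Fin n) // S.card ≤ r}, (↥S.1 → Fin q) :=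
    fun y => ⟨⟨S' y, hS'card y⟩, fun i => y i.1⟩ with hf
  set recover : (Σ S : {S : Finset (Fin n) // S.card ≤ r}, (↥S.1 → Fin q)) →
      (Fin n → Fin q) := fun p i => if h : i ∈ p.1.1 then p.2 ⟨i, h⟩ else c i with hrecover
  have hrec : ∀ y, hammingDist y c ≤ r → recover (f y) = y := by
    intro y hy
    have hSy : S' y = Finset.univ.filter fun i => y i ≠ c i := by
      rw [hS']; exact if_pos (by rw [← hdist]; exact hy)
    funext i
    simp only [hrecover, hf]
    split_ifs with h
    · rfl
    · rw [hSy, Finset.mem_filter] at h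
      push_neg at h
      exact (h (Finset.mem_univ i)).symm
  have hinj : Set.InjOn f ↑(Finset.univ.filter
      fun y : Fin n → Fin q => hammingDist y c ≤ r) := by
    intro y hy z hz hyz
    rw [Finset.coe_filter, Set.mem_setOf_eq] at hy hz
    rw [← hrec y hy.2, ← hrec z hz.2, hyz]
  have hcard := Finset.card_le_card_of_injOn f (fun a _ => Finset.mem_univ (f a)) hinj
  refine le_trans hcard ?_
  rw [Finset.card_univ]
  calc Fintype.card (Σ S : {S : Finset (Fin n) // S.card ≤ r}, (↥S.1 → Fin q))
      = ∑ S : {S : Finset (Fin n) // S.card ≤ r}, q ^ (S.1.card) := by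
        rw [Fintype.card_sigma]
        exact Finset.sum_congr rfl fun S _ => by
          rw [Fintype.card_fun, Fintype.card_fin, Fintype.card_coe]
    _ ≤ ∑ _S : {S : Finset (Fin n) // S.card ≤ r}, q ^ r := by
        exact Finset.sum_le_sum fun S _ => Nat.pow_le_pow_right hq S.2
    _ = Fintype.card {S : Finset (Fin n) // S.card ≤ r} * q ^ r := by
        rw [Finset.sum_const, Finset.card_univ, smul_eq_mul]
    _ ≤ 2 ^ n * q ^ r := by
        have := Fintype.card_subtype_le (fun S : Finset (Fin n) => S.card ≤ r)
        rw [Fintype.card_finset, Fintype.card_fin] at this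
        exact Nat.mul_le_mul_right _ this

lemma gv_code (q n d : ℕ) (hq : 1 ≤ q) (hd : 1 ≤ d) :
    ∃ C : Finset (Fin n → Fin q),
      (∀ c ∈ C, ∀ c' ∈ C, c ≠ c' → d ≤ hammingDist c c') ∧
      q ^ n ≤ C.card * (2 ^ n * q ^ (d - 1)) := by
  classical
  set good : Finset (Fin n → Fin q) → Prop :=
    fun C => ∀ c ∈ C, ∀ c' ∈ C, c ≠ c' → d ≤ hammingDist c c' with hgood
  have hne : (Finset.univ.filter good).Nonempty :=
    ⟨∅, Finset.mem_filter.mpr ⟨Finset.mem_univ _, fun c hc => absurd hc (by simp)⟩⟩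
  obtain ⟨C, hCmem, hCmax⟩ := Finset.exists_max_image (Finset.univ.filter good)
    (fun C => C.card) hne
  have hCgood : good C := (Finset.mem_filter.mp hCmem).2
  refine ⟨C, hCgood, ?_⟩
  have hcover : ∀ y : Fin n → Fin q, ∃ c ∈ C, hammingDist y c ≤ d - 1 := by
    intro y
    by_contra hcon
    push_neg at hcon
    have hyC : y ∉ C := by
      intro hy
      have := hcon y hy
      rw [hammingDist_self] at this
      omega
    have hgood' : good (insert y C) := by
      intro c hc c' hc' hne'
      rcases Finset.mem_insert.mp hc with rfl | hcC
      · rcases Finset.mem_insert.mp hc' with rfl | hc'C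
        · exact absurd rfl hne'
        · have := hcon c' hc'C
          omega
      · rcases Finset.mem_insert.mp hc' with rfl | hc'C
        · have := hcon c hcC
          rw [hammingDist_comm]
          omega
        · exact hCgood c hcC c' hc'C hne'
    have hmem' : insert y C ∈ Finset.univ.filter good :=
      Finset.mem_filter.mpr ⟨Finset.mem_univ _, hgood'⟩
    have := hCmax _ hmem'
    rw [Finset.card_insert_of_notMem hyC] at this
    omega
  have hsub : (Finset.univ : Finset (Fin n → Fin q)) ⊆
      C.biUnion (fun c => Finset.univ.filter fun y => hammingDist y c ≤ d - 1) := by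
    intro y _
    obtain ⟨c, hc, hyc⟩ := hcover y
    exact Finset.mem_biUnion.mpr ⟨c, hc, Finset.mem_filter.mpr ⟨Finset.mem_univ _, hyc⟩⟩
  calc q ^ n = (Finset.univ : Finset (Fin n → Fin q)).card := by
        rw [Finset.card_univ, Fintype.card_fun, Fintype.card_fin, Fintype.card_fin]
    _ ≤ (C.biUnion (fun c => Finset.univ.filter fun y => hammingDist y c ≤ d - 1)).card :=
        Finset.card_le_card hsub
    _ ≤ ∑ c ∈ C, (Finset.univ.filter fun y => hammingDist y c ≤ d - 1).card :=
        Finset.card_biUnion_le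
    _ ≤ ∑ _c ∈ C, 2 ^ n * q ^ (d - 1) :=
        Finset.sum_le_sum fun c _ => hamming_ball_card_le hq c (d - 1)
    _ = C.card * (2 ^ n * q ^ (d - 1)) := by
        rw [Finset.sum_const, smul_eq_mul]

lemma side_family (εc : ℝ) (hεc : 0 < εc) (hεc2 : εc ≤ 1 / 2) (M : ℕ)
    (hn1 : 1 ≤ M / 2 ^ (Nat.ceil (2 / εc))) :
    ∃ (M₁ : ℕ) (A : Fin M₁ → Finset (Fin M)),
      2 ^ (M / 2 ^ (Nat.ceil (2 / εc))) ≤ M₁ ∧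
      (∀ a, (A a).card = M / 2 ^ (Nat.ceil (2 / εc))) ∧
      (∀ a a', a ≠ a' → ((A a ∩ A a').card : ℝ) ≤ εc * ((A a).card : ℝ)) := by
  classical
  set s := Nat.ceil (2 / εc) with hs
  set q := 2 ^ s with hq
  set n := M / q with hn
  set j := Nat.floor (εc * n) with hj
  have hq1 : 1 ≤ q := Nat.one_le_two_pow
  have hjn : (j : ℝ) ≤ εc * n := Nat.floor_le (by positivity)
  have hjlt : j < n := by
    have h1 : (j : ℝ) ≤ εc * n := hjn
    have h2 : εc * n ≤ (1 / 2) * n := by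
      refine mul_le_mul_of_nonneg_right hεc2 (by positivity)
    have h3 : (1 : ℝ) ≤ n := by exact_mod_cast hn1
    have : (j : ℝ) < n := by nlinarith
    exact_mod_cast this
  set d := n - j with hd
  have hd1 : 1 ≤ d := by omega
  obtain ⟨C, hCdist, hCcard⟩ := gv_code q n d hq1 hd1
  -- `C` is large : `2 ^ n ≤ C.card`
  have hstwo : (2 : ℝ) / εc ≤ s := Nat.le_ceil _
  have hsj : 2 * n ≤ s * (j + 1) := by
    have h1 : (εc * n : ℝ) < (j + 1 : ℝ) := by
      have := Nat.lt_floor_add_one (εc * n)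
      push_cast
      push_cast at this
      linarith
    have h2 : (2 * n : ℝ) ≤ (s : ℝ) * (j + 1 : ℝ) := by
      have hεn : (0:ℝ) ≤ εc * n := by positivity
      have h3 : (2 / εc) * (εc * n) ≤ (s : ℝ) * (j + 1 : ℝ) := by
        refine mul_le_mul hstwo h1.le hεn (by positivity)
      have h4 : (2 / εc) * (εc * (n:ℝ)) = 2 * n := by
        field_simp
      linarith [h3, h4]
    exact_mod_cast h2
  have hClarge : 2 ^ n ≤ C.card := by
    have hqn : q ^ n = q ^ (d - 1) * q ^ (j + 1) := by
      rw [← pow_add]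
      congr 1
      omega
    have hqj : 2 ^ n * 2 ^ n ≤ q ^ (j + 1) := by
      rw [hq, ← pow_mul, ← pow_add]
      exact Nat.pow_le_pow_right (by norm_num) (by omega)
    have h1 : 2 ^ n * (2 ^ n * q ^ (d - 1)) ≤ C.card * (2 ^ n * q ^ (d - 1)) := by
      calc 2 ^ n * (2 ^ n * q ^ (d - 1)) = (2 ^ n * 2 ^ n) * q ^ (d - 1) := by ring
        _ ≤ q ^ (j + 1) * q ^ (d - 1) := Nat.mul_le_mul_right _ hqj
        _ = q ^ n := by rw [hqn, Nat.mul_comm]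
        _ ≤ C.card * (2 ^ n * q ^ (d - 1)) := hCcard
    exact Nat.le_of_mul_le_mul_right h1 (by positivity)
  -- build the family from the codewords
  have hnqM : n * q ≤ M := Nat.div_mul_le_self M q
  set emb : Fin n × Fin q → Fin M := fun p => Fin.castLE hnqM (finProdFinEquiv p) with hemb
  have hembInj : Function.Injective emb := by
    intro p p' hpp'
    rw [hemb] at hpp'
    exact finProdFinEquiv.injective (Fin.castLE_injective hnqM hpp')
  set mk : (Fin n → Fin q) → Finset (Fin M) :=
    fun c => Finset.univ.image (fun x : Fin n => emb (x, c x)) with hmk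
  have hmkInj : ∀ c : Fin n → Fin q, Function.Injective (fun x : Fin n => emb (x, c x)) := by
    intro c x x' hxx'
    have := hembInj hxx'
    exact congrArg Prod.fst this
  have hmkcard : ∀ c, (mk c).card = n := by
    intro c
    rw [hmk]
    rw [Finset.card_image_of_injective _ (hmkInj c), Finset.card_univ, Fintype.card_fin]
  have hmkinter : ∀ c c' : Fin n → Fin q, d ≤ hammingDist c c' →
      ((mk c ∩ mk c').card : ℝ) ≤ εc * n := by
    intro c c' hdist
    have hsubset : mk c ∩ mk c' ⊆
        (Finset.univ.filter fun x => c x = c' x).image (fun x : Fin n => emb (x, c x)) := by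
      intro z hz
      obtain ⟨hz1, hz2⟩ := Finset.mem_inter.mp hz
      rw [hmk] at hz1 hz2
      obtain ⟨x, _, hx⟩ := Finset.mem_image.mp hz1
      obtain ⟨x', _, hx'⟩ := Finset.mem_image.mp hz2
      have hxx' : (x, c x) = (x', c' x') := hembInj (hx.trans hx'.symm)
      have hx1 : x = x' := congrArg Prod.fst hxx'
      have hx2 : c x = c' x := by
        have := congrArg Prod.snd hxx'
        simp only at this
        rw [hx1] at this ⊢
        exact this
      refine Finset.mem_image.mpr ⟨x, Finset.mem_filter.mpr ⟨Finset.mem_univ _, hx2⟩, hx⟩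
    have hcard1 : (mk c ∩ mk c').card ≤
        (Finset.univ.filter fun x => c x = c' x).card :=
      le_trans (Finset.card_le_card hsubset) (Finset.card_image_le)
    have hcard2 : (Finset.univ.filter fun x => c x = c' x).card = n - hammingDist c c' := by
      have := Finset.card_filter_add_card_filter_not
        (s := (Finset.univ : Finset (Fin n))) (p := fun x => c x = c' x)
      have hham : hammingDist c c' = (Finset.univ.filter fun x => ¬ (c x = c' x)).card := rfl
      rw [Finset.card_univ, Fintype.card_fin] at this
      omega
    have hcard3 : (mk c ∩ mk c').card ≤ j := by
      rw [hcard2] at hcard1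
      omega
    calc ((mk c ∩ mk c').card : ℝ) ≤ (j : ℝ) := by exact_mod_cast hcard3
      _ ≤ εc * n := hjn
  -- index the family by `Fin C.card`
  set e := C.equivFin.symm with he
  refine ⟨C.card, fun a => mk (e a).1, hClarge, fun a => hmkcard _, ?_⟩
  intro a a' haa'
  rw [hmkcard]
  refine hmkinter _ _ (hCdist _ (e a).2 _ (e a').2 ?_)
  intro hcc
  exact haa' (e.injective (Subtype.ext hcc))

end GV

section Build

lemma logb_two_nat_pow (m : ℕ) : Real.logb 2 ((2:ℝ) ^ m) = m := by
  rw [Real.logb_pow, Real.logb_self_eq_one (by norm_num), mul_one]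

lemma build_side (εc δ R : ℝ) (hεc : 0 < εc) (hεc2 : εc ≤ 1/2) (hδ : 0 < δ)
    (k M : ℕ) (hk0 : 0 < k) (hM : 1 ≤ M)
    (hrate : R - δ/2 ≤ Real.logb 2 (M : ℝ) / (k : ℝ))
    (hkbig : ((Nat.ceil (2/εc) : ℕ) : ℝ) + 1 ≤ (k : ℝ) * (δ/2)) :
    ∃ (M₁ : ℕ) (A : Fin M₁ → Finset (Fin M)),
      (∀ a, (A a).Nonempty) ∧
      (∀ a a', a ≠ a' → ((A a ∩ A a').card : ℝ) ≤ εc * ((A a).card : ℝ)) ∧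
      (R - δ ≤ Real.logb 2 (Real.logb 2 (M₁ : ℝ)) / (k : ℝ)) := by
  have hk0' : (0:ℝ) < k := by exact_mod_cast hk0
  by_cases hRδ : R ≤ δ
  · refine ⟨1, fun _ => {⟨0, hM⟩}, fun a => ⟨_, Finset.mem_singleton_self _⟩, ?_, ?_⟩
    · intro a a' haa'; exact absurd (Subsingleton.elim a a') haa'
    · have h0 : Real.logb 2 (Real.logb 2 ((1:ℕ):ℝ)) = 0 := by
        norm_num [Real.logb_one]
      rw [h0, zero_div]
      linarith
  · push_neg at hRδ
    set s := Nat.ceil (2/εc) with hs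
    set q := 2^s with hqdef
    have hq0 : 0 < q := by positivity
    have hlogM : (k:ℝ) * (R - δ/2) ≤ Real.logb 2 (M:ℝ) := by
      have h := (le_div_iff₀ hk0').mp hrate
      nlinarith [h]
    have hs1 : ((s:ℝ)+1) ≤ Real.logb 2 (M:ℝ) := by
      nlinarith [hlogM, hkbig]
    have hM0 : (0:ℝ) < (M:ℝ) := by exact_mod_cast hM
    have hMge : 2^(s+1) ≤ M := by
      have h2 : ((s+1 : ℕ):ℝ) ≤ Real.logb 2 (M:ℝ) := by push_cast; linarith
      have h3 := (Real.le_logb_iff_rpow_le (by norm_num) hM0).mp h2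
      rw [Real.rpow_natCast] at h3
      exact_mod_cast h3
    have h2q : 2 * q ≤ M := by
      have hpow : 2^(s+1) = 2*q := by rw [hqdef, pow_succ]; ring
      omega
    have hn1 : 1 ≤ M / q := (Nat.one_le_div_iff hq0).mpr (by omega)
    obtain ⟨M₁, A, hbig, hcard, hint⟩ := side_family εc hεc hεc2 M hn1
    rw [← hs, ← hqdef] at hbig hcard
    set n := M / q with hn
    refine ⟨M₁, A, ?_, hint, ?_⟩
    · intro a
      rw [← Finset.card_pos, hcard a]
      omega
    · have hM₁ : 2 ≤ M₁ := by
        calc 2 = 2^1 := (pow_one 2).symm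
          _ ≤ 2^n := Nat.pow_le_pow_right (by norm_num) hn1
          _ ≤ M₁ := hbig
      have hM₁pos : (0:ℝ) < (M₁:ℝ) := by exact_mod_cast lt_of_lt_of_le (by norm_num) hM₁
      have hcast : ((2:ℝ))^n ≤ (M₁:ℝ) := by exact_mod_cast hbig
      have hlog1 : (n:ℝ) ≤ Real.logb 2 (M₁:ℝ) := by
        calc (n:ℝ) = Real.logb 2 ((2:ℝ)^n) := (logb_two_nat_pow n).symm
          _ ≤ Real.logb 2 (M₁:ℝ) :=
            Real.logb_le_logb_of_le one_lt_two (by positivity) hcast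
      have hnpos : (0:ℝ) < (n:ℝ) := by exact_mod_cast hn1
      have hlog2 : Real.logb 2 (n:ℝ) ≤ Real.logb 2 (Real.logb 2 (M₁:ℝ)) :=
        Real.logb_le_logb_of_le one_lt_two hnpos hlog1
      have hq0' : (0:ℝ) < (q:ℝ) := by exact_mod_cast hq0
      have h2q' : 2*(q:ℝ) ≤ (M:ℝ) := by exact_mod_cast h2q
      have hnlow : (M:ℝ) / ((2:ℝ)^(s+1)) ≤ (n:ℝ) := by
        have hdm := Nat.div_add_mod M q
        have hmod : M % q < q := Nat.mod_lt _ hq0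
        have hcast2 : (M:ℝ) = (q:ℝ) * (n:ℝ) + ((M % q : ℕ):ℝ) := by
          rw [hn]; exact_mod_cast hdm.symm
        have hmod' : ((M % q : ℕ):ℝ) < (q:ℝ) := by exact_mod_cast hmod
        have hcastpow : ((2:ℝ))^(s+1) = 2*(q:ℝ) := by
          rw [hqdef]; push_cast; rw [pow_succ]; ring
        rw [hcastpow, div_le_iff₀ (by linarith)]
        nlinarith
      have hlog3 : Real.logb 2 ((M:ℝ)/((2:ℝ)^(s+1))) ≤ Real.logb 2 (n:ℝ) :=
        Real.logb_le_logb_of_le one_lt_two (by positivity) hnlow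
      have hlog4 : Real.logb 2 ((M:ℝ)/((2:ℝ)^(s+1))) = Real.logb 2 (M:ℝ) - ((s:ℝ)+1) := by
        rw [Real.logb_div (ne_of_gt hM0) (by positivity), logb_two_nat_pow]
        push_cast
        ring
      have hexpand : (k:ℝ)*(R-δ) = (k:ℝ)*(R-δ/2) - (k:ℝ)*(δ/2) := by ring
      rw [le_div_iff₀ hk0']
      calc (R - δ) * (k:ℝ) = (k:ℝ)*(R-δ) := by ring
        _ ≤ Real.logb 2 (M:ℝ) - ((s:ℝ)+1) := by
            rw [hexpand]; linarith [hlogM, hkbig]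
        _ ≤ Real.logb 2 (Real.logb 2 (M₁:ℝ)) := by linarith [hlog2, hlog3, hlog4]

end Build

section Final

lemma huge_rate (k c : ℕ) (hk : 0 < k) (R δ : ℝ) (hR : R ≤ (c:ℝ)) (hδ : 0 < δ) :
    R - δ ≤ Real.logb 2 (Real.logb 2 ((2^(2^(k*c)) : ℕ) : ℝ)) / (k:ℝ) := by
  have hk' : (0:ℝ) < (k:ℝ) := by exact_mod_cast hk
  have h1 : ((2^(2^(k*c)) : ℕ) : ℝ) = (2:ℝ)^(2^(k*c) : ℕ) := by push_cast; ring
  rw [h1, logb_two_nat_pow]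
  have h2 : ((2^(k*c) : ℕ) : ℝ) = (2:ℝ)^(k*c : ℕ) := by push_cast; ring
  rw [h2, logb_two_nat_pow]
  rw [le_div_iff₀ hk']
  have h3 : ((k*c : ℕ) : ℝ) = (k:ℝ)*(c:ℝ) := by push_cast; ring
  rw [h3]
  nlinarith

lemma zero_rate (k : ℕ) (hk : 0 < k) (R δ : ℝ) (hR : R ≤ δ/2) (hδ : 0 < δ) :
    R - δ ≤ Real.logb 2 (Real.logb 2 ((0 : ℕ) : ℝ)) / (k:ℝ) := by
  have hk' : (0:ℝ) < (k:ℝ) := by exact_mod_cast hk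
  rw [Nat.cast_zero, Real.logb_zero, Real.logb_zero, zero_div]
  linarith

end Final

/-- **Achievability.**  For any CCQ channel family (not necessarily discrete and
memoryless), every transmission rate pair achievable with stochastic encoders is an
achievable simultaneous identification rate pair: `C_st(𝐖) ⊆ C_id^sim(𝐖)`. -/
theorem Cst_subset_CidSim {X Y : Type} [Fintype X] [Fintype Y] (d : ℕ)
    (W : (k : ℕ) → (Fin k → X) → (Fin k → Y) →
      Matrix (Fin k → Fin d) (Fin k → Fin d) ℂ)
    (hW : ∀ k x y, (W k x y).PosSemidef ∧ (W k x y).trace = 1) :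
    Cst d W ⊆ CidSim d W := by
  rintro ⟨R₁, R₂⟩ ⟨hR₁, hR₂, hach⟩
  refine ⟨hR₁, hR₂, ?_⟩
  intro ε₁ hε₁ ε₂ hε₂ δ hδ
  set ε' := min (min ε₁ (ε₂/2)) (1/2) with hε'def
  have hε'pos : 0 < ε' := lt_min (lt_min hε₁ (by linarith)) (by norm_num)
  have hε'le₁ : ε' ≤ ε₁ := le_trans (min_le_left _ _) (min_le_left _ _)
  have hε'le₂ : ε' ≤ ε₂/2 := le_trans (min_le_left _ _) (min_le_right _ _)
  set εc := min (ε₂/2) (1/2) with hεcdef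
  have hεcpos : 0 < εc := lt_min (by linarith) (by norm_num)
  have hεc2 : εc ≤ 1/2 := min_le_right _ _
  have hεcle₂ : εc ≤ ε₂/2 := min_le_left _ _
  set s := Nat.ceil (2/εc) with hsdef
  obtain ⟨k₀', hk₀'⟩ := hach ε' hε'pos (δ/2) (half_pos hδ)
  refine ⟨max k₀' (max 1 (Nat.ceil ((2*((s:ℝ)+1))/δ))), ?_⟩
  intro k hk
  have hk1 : 1 ≤ k :=
    le_trans (le_trans (le_max_left 1 _) (le_max_right k₀' _)) hk
  have hk0 : 0 < k := hk1
  have hk0' : (0:ℝ) < k := by exact_mod_cast hk0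
  have hkbig : ((s : ℕ) : ℝ) + 1 ≤ (k:ℝ) * (δ/2) := by
    have h0 : Nat.ceil ((2*((s:ℝ)+1))/δ) ≤ k :=
      le_trans (le_trans (le_max_right 1 _) (le_max_right k₀' _)) hk
    have h1 : ((Nat.ceil ((2*((s:ℝ)+1))/δ) : ℕ) : ℝ) ≤ k := by exact_mod_cast h0
    have h2 : (2*((s:ℝ)+1))/δ ≤ (k:ℝ) := le_trans (Nat.le_ceil _) h1
    rw [div_le_iff₀ hδ] at h2
    nlinarith
  obtain ⟨M, N, P, Q, D, hP, hQ, hD, hDsum, hrM, hrN, herr⟩ :=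
    hk₀' k (le_trans (le_max_left _ _) hk)
  by_cases hM0 : M = 0
  · -- no sender messages : the matrix algebra information is irrelevant
    subst hM0
    have hR1le : R₁ ≤ δ/2 := by
      rw [Nat.cast_zero, Real.logb_zero, zero_div] at hrM
      linarith
    by_cases hN0 : N = 0
    · subst hN0
      have hR2le : R₂ ≤ δ/2 := by
        rw [Nat.cast_zero, Real.logb_zero, zero_div] at hrN
        linarith
      refine ⟨0, 0, fun m => m.elim0, fun n => n.elim0, fun m => m.elim0,
        fun m => m.elim0, fun n => n.elim0, fun m => m.elim0,
        ⟨1, 1, fun _ _ => 1, fun m => m.elim0, fun n => n.elim0,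
          fun _ _ => Matrix.PosSemidef.one, by simp, fun m => m.elim0⟩,
        zero_rate k hk0 R₁ δ hR1le hδ, zero_rate k hk0 R₂ δ hR2le hδ,
        fun m => m.elim0, fun m => m.elim0⟩
    · refine ⟨0, 2^(2^(k*Nat.ceil R₂)), fun m => m.elim0,
        fun _ => Q ⟨0, Nat.pos_of_ne_zero hN0⟩, fun m => m.elim0,
        fun m => m.elim0, fun _ => hQ _, fun m => m.elim0,
        ⟨1, 1, fun _ _ => 1, fun m => m.elim0, fun _ => ∅,
          fun _ _ => Matrix.PosSemidef.one, by simp, fun m => m.elim0⟩,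
        zero_rate k hk0 R₁ δ hR1le hδ,
        huge_rate k (Nat.ceil R₂) hk0 R₂ δ (Nat.le_ceil R₂) hδ,
        fun m => m.elim0, fun m => m.elim0⟩
  by_cases hN0 : N = 0
  · subst hN0
    have hR2le : R₂ ≤ δ/2 := by
      rw [Nat.cast_zero, Real.logb_zero, zero_div] at hrN
      linarith
    refine ⟨2^(2^(k*Nat.ceil R₁)), 0,
      fun _ => P ⟨0, Nat.pos_of_ne_zero hM0⟩, fun n => n.elim0,
      fun _ n => n.elim0,
      fun _ => hP _, fun n => n.elim0, fun _ n => n.elim0,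
      ⟨1, 1, fun _ _ => 1, fun _ => ∅, fun n => n.elim0,
        fun _ _ => Matrix.PosSemidef.one, by simp, fun _ n => n.elim0⟩,
      huge_rate k (Nat.ceil R₁) hk0 R₁ δ (Nat.le_ceil R₁) hδ,
      zero_rate k hk0 R₂ δ hR2le hδ,
      fun _ n => n.elim0, fun _ n => n.elim0⟩
  · -- the main case
    have hM1 : 1 ≤ M := Nat.pos_of_ne_zero hM0
    have hN1 : 1 ≤ N := Nat.pos_of_ne_zero hN0
    obtain ⟨M₁, A, hAne, hAint, hArate⟩ :=
      build_side εc δ R₁ hεcpos hεc2 hδ k M hk0 hM1 hrM hkbig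
    obtain ⟨N₁, B, hBne, hBint, hBrate⟩ :=
      build_side εc δ R₂ hεcpos hεc2 hδ k N hk0 hN1 hrN hkbig
    have hcross : ∀ a b a' b', (a, b) ≠ (a', b') →
        (((A a ∩ A a').card : ℝ) * ((B b ∩ B b').card : ℝ)) ≤
          εc * (((A a).card : ℝ) * ((B b).card : ℝ)) := by
      intro a b a' b' hne
      by_cases haa : a = a'
      · subst haa
        have hbb : b ≠ b' := fun h => hne (by rw [h])
        have h1 : ((A a ∩ A a).card : ℝ) = ((A a).card : ℝ) := by
          rw [Finset.inter_self]
        have h2 := hBint b b' hbb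
        rw [h1]
        calc ((A a).card : ℝ) * ((B b ∩ B b').card : ℝ)
            ≤ ((A a).card : ℝ) * (εc * ((B b).card : ℝ)) :=
              mul_le_mul_of_nonneg_left h2 (Nat.cast_nonneg _)
          _ = εc * (((A a).card : ℝ) * ((B b).card : ℝ)) := by ring
      · have h2 := hAint a a' haa
        have h3 : ((B b ∩ B b').card : ℝ) ≤ ((B b).card : ℝ) := by
          exact_mod_cast Finset.card_le_card Finset.inter_subset_left
        calc ((A a ∩ A a').card : ℝ) * ((B b ∩ B b').card : ℝ)
            ≤ (εc * ((A a).card : ℝ)) * ((B b).card : ℝ) :=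
              mul_le_mul h2 h3 (Nat.cast_nonneg _)
                (mul_nonneg hεcpos.le (Nat.cast_nonneg _))
          _ = εc * (((A a).card : ℝ) * ((B b).card : ℝ)) := by ring
    obtain ⟨P', Q', I, h1, h2, h3, h4, h5, h6⟩ :=
      transform (W k) (fun x y => (hW k x y).1) (fun x y => (hW k x y).2)
        P Q D hP hQ hD hDsum ε' hε'pos.le herr A B hAne hBne εc hεcpos.le hcross
    refine ⟨M₁, N₁, P', Q', I, h1, h2, h3, h4, hArate, hBrate, ?_, ?_⟩
    · exact fun m n => le_trans (h5 m n) hε'le₁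
    · intro m n m' n' hne
      refine le_trans (h6 m n m' n' hne) ?_
      linarith
end

section
/- Let M ∈ ℕ with M ≥ 1, let ε ∈ (0,1), and let λ > 0 satisfy ε·log₂(1/λ − 1) > 2. Then there exist N ∈ ℕ with N ≥ (1/M)·2^{⌊λM⌋} and pairwise distinct subsets A_1, ..., A_N of {1, ..., M} such that |A_i| = ⌊λM⌋ for every i ∈ [N], and |A_i ∩ A_j| ≤ ε·⌊λM⌋ for all i, j ∈ [N] with i ≠ j. -/
open BigOperators

lemma lober_choose_mono {n m t : ℕ} (h : m ≤ t) (h2 : 2 * t ≤ n) :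
    n.choose m ≤ n.choose t := by
  induction t, h using Nat.le_induction with
  | base => exact le_rfl
  | succ t ht ih =>
    exact (ih (by omega)).trans (Nat.choose_le_succ_of_lt_half_left (by omega))

lemma lober_choose_ratio {M k : ℕ} (hkM : k ≤ M) {c : ℝ} (hc : 0 ≤ c)
    (hck : c * k ≤ (M : ℝ) - k) :
    ∀ s, s ≤ k → c ^ s * (M.choose (k - s) : ℝ) ≤ (M.choose k : ℝ) := by
  intro s hs
  induction s with
  | zero => simp
  | succ s ih =>
    have hs' : s ≤ k := by omega
    set j := k - s - 1 with hj
    have hj1 : j + 1 = k - s := by omega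
    have hjk : j ≤ k := by omega
    have key : c * (M.choose j : ℝ) ≤ (M.choose (j + 1) : ℝ) := by
      have hid : M.choose (j + 1) * (j + 1) = M.choose j * (M - j) :=
        Nat.choose_succ_right_eq M j
      have hidR : (M.choose (j + 1) : ℝ) * ((j : ℝ) + 1) = (M.choose j : ℝ) * ((M : ℝ) - j) := by
        have h := congrArg (Nat.cast : ℕ → ℝ) hid
        push_cast [Nat.cast_sub (hjk.trans hkM)] at h
        linarith [h]
      have hcj : c * ((j : ℝ) + 1) ≤ (M : ℝ) - j := by
        have h1 : c * ((j : ℝ) + 1) ≤ c * k := by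
          apply mul_le_mul_of_nonneg_left _ hc
          have : (j : ℝ) + 1 ≤ (k : ℝ) := by exact_mod_cast Nat.succ_le_of_lt (by omega)
          linarith
        have h2 : (M : ℝ) - k ≤ (M : ℝ) - j := by
          have : (j : ℝ) ≤ (k : ℝ) := by exact_mod_cast hjk
          linarith
        linarith
      have hjpos : (0 : ℝ) < (j : ℝ) + 1 := by positivity
      rw [← mul_le_mul_iff_of_pos_right hjpos]
      calc c * (M.choose j : ℝ) * ((j : ℝ) + 1)
          = (M.choose j : ℝ) * (c * ((j : ℝ) + 1)) := by ring
        _ ≤ (M.choose j : ℝ) * ((M : ℝ) - j) := by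
            apply mul_le_mul_of_nonneg_left hcj (by positivity)
        _ = (M.choose (j + 1) : ℝ) * ((j : ℝ) + 1) := by
            rw [hidR]
    calc c ^ (s + 1) * (M.choose (k - (s + 1)) : ℝ)
        = c ^ s * (c * (M.choose j : ℝ)) := by
          rw [show k - (s + 1) = j by omega]; ring
      _ ≤ c ^ s * (M.choose (j + 1) : ℝ) := by
          apply mul_le_mul_of_nonneg_left key (by positivity)
      _ = c ^ s * (M.choose (k - s) : ℝ) := by rw [hj1]
      _ ≤ (M.choose k : ℝ) := ih hs'

/-- **Löber's combinatorial lemma.** For `M ≥ 1`, `ε ∈ (0,1)` and `λ > 0` with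
`ε·log₂(1/λ − 1) > 2`, there are at least `(1/M)·2^⌊λM⌋` pairwise distinct subsets
`A₁, …, A_N` of `{1,…,M}`, each of cardinality `⌊λM⌋`, whose pairwise intersections
satisfy `|Aᵢ ∩ Aⱼ| ≤ ε·⌊λM⌋` for `i ≠ j`. -/
theorem lober_lemma (M : ℕ) (hM : 1 ≤ M) (ε : ℝ) (hε : ε ∈ Set.Ioo (0:ℝ) 1)
    (lam : ℝ) (hlam : 0 < lam)
    (hcond : 2 < ε * Real.logb 2 (1 / lam - 1)) :
    ∃ (N : ℕ) (A : Fin N → Finset (Fin M)),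
      ((1 : ℝ) / M) * 2 ^ (⌊lam * M⌋₊) ≤ (N : ℝ) ∧
      Function.Injective A ∧
      (∀ i, (A i).card = ⌊lam * M⌋₊) ∧
      (∀ i j, i ≠ j → ((A i ∩ A j).card : ℝ) ≤ ε * (⌊lam * M⌋₊ : ℝ)) := by
  classical
  obtain ⟨hε0, hε1⟩ := hε
  set k := ⌊lam * M⌋₊ with hkdef
  have hMpos : (0 : ℝ) < M := by exact_mod_cast hM
  by_cases hk0 : k = 0
  · refine ⟨1, fun _ => (∅ : Finset (Fin M)), ?_, ?_, ?_, ?_⟩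
    · rw [hk0]
      simp only [pow_zero, mul_one, Nat.cast_one]
      rw [div_le_one hMpos]
      exact_mod_cast hM
    · intro a b _; exact Subsingleton.elim a b
    · intro _; simp [hk0]
    · intro i j hij; exact absurd (Subsingleton.elim i j) hij
  have hk1 : 1 ≤ k := Nat.one_le_iff_ne_zero.mpr hk0
  -- basic real facts
  set c : ℝ := 1 / lam - 1 with hcdef
  have hL : 2 < Real.logb 2 c := by
    by_contra h
    push_neg at h
    nlinarith [mul_le_mul_of_nonneg_left h (le_of_lt hε0)]
  have hcpos : 0 < c := by
    rcases lt_trichotomy c 0 with h | h | h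
    · exfalso
      have hy : 0 < -c := by linarith
      have hy1 : -c < 1 := by
        have hpos : 0 < 1 / lam := by positivity
        simp only [hcdef]; linarith
      have hneg : Real.logb 2 c < 0 := by
        rw [show c = -(-c) by ring, Real.logb, Real.log_neg_eq_log]
        exact div_neg_of_neg_of_pos (Real.log_neg hy hy1) (Real.log_pos (by norm_num))
      linarith
    · exfalso; rw [h] at hL; simp [Real.logb] at hL; linarith
    · exact h
  have hc4 : (4 : ℝ) < c := by
    have := (Real.lt_logb_iff_rpow_lt (by norm_num : (1:ℝ) < 2) hcpos).mp hL
    have h4 : (2 : ℝ) ^ (2 : ℝ) = 4 := by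
      rw [show (2 : ℝ) = ((2 : ℕ) : ℝ) by norm_num]
      rw [Real.rpow_natCast]; norm_num
    linarith [h4 ▸ this]
  have hlam5 : lam < 1 / 5 := by
    have h5 : 5 < 1 / lam := by simp only [hcdef] at hc4; linarith
    have h5' : 5 * lam < 1 := (lt_div_iff₀ hlam).mp h5
    linarith
  have hkle : (k : ℝ) ≤ lam * M := Nat.floor_le (by positivity)
  have h5k : 5 * k < M := by
    have : 5 * (k : ℝ) < M := by nlinarith
    exact_mod_cast this
  have hkM : k ≤ M := by omega
  have hk1M : k + 1 ≤ M := by omega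
  set s := ⌊ε * k⌋₊ + 1 with hsdef
  have hkR : (0:ℝ) < k := by exact_mod_cast hk1
  have hsk : s ≤ k := by
    have : ⌊ε * k⌋₊ < k := (Nat.floor_lt (by positivity)).mpr (by nlinarith)
    omega
  have hes : ε * k ≤ (s : ℝ) := by
    have := Nat.lt_floor_add_one (ε * k)
    push_cast [hsdef]
    push_cast at this
    linarith
  have hck : c * k ≤ (M : ℝ) - k := by
    have hu : (0 : ℝ) < 1 / lam := by positivity
    have h3 : (1 / lam) * (k : ℝ) ≤ (1 / lam) * (lam * M) :=
      mul_le_mul_of_nonneg_left hkle (le_of_lt hu)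
    have h4 : (1 / lam) * (lam * M) = (M : ℝ) := by field_simp
    rw [hcdef]
    nlinarith [h3, h4]
  -- the family of candidate sets
  set 𝒮 : Finset (Finset (Fin M)) := Finset.powersetCard k Finset.univ with h𝒮def
  have h𝒮mem : ∀ B : Finset (Fin M), B ∈ 𝒮 ↔ B.card = k := fun B =>
    Finset.mem_powersetCard_univ
  set 𝒢 : Finset (Finset (Finset (Fin M))) :=
    𝒮.powerset.filter (fun F => ∀ A ∈ F, ∀ B ∈ F, A ≠ B → (A ∩ B).card < s) with h𝒢def
  have hemp : (∅ : Finset (Finset (Fin M))) ∈ 𝒢 := by simp [h𝒢def]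
  obtain ⟨F, hF𝒢, hFmax⟩ := 𝒢.exists_max_image (fun F => F.card) ⟨∅, hemp⟩
  rw [h𝒢def, Finset.mem_filter, Finset.mem_powerset] at hF𝒢
  obtain ⟨hFsub, hFpair⟩ := hF𝒢
  -- covering
  have cover : 𝒮 ⊆ F.biUnion (fun A => 𝒮.filter (fun B => s ≤ (A ∩ B).card)) := by
    intro B hB
    rw [Finset.mem_biUnion]
    by_cases hBF : B ∈ F
    · exact ⟨B, hBF, Finset.mem_filter.mpr ⟨hB, by
        rw [Finset.inter_self, (h𝒮mem B).mp hB]; exact hsk⟩⟩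
    · have hF' : insert B F ∉ 𝒢 := by
        intro hmem
        have := hFmax _ hmem
        rw [Finset.card_insert_of_notMem hBF] at this
        omega
      simp only [h𝒢def, Finset.mem_filter, Finset.mem_powerset, not_and, not_forall,
        not_lt] at hF'
      have hsub' : insert B F ⊆ 𝒮 := Finset.insert_subset hB hFsub
      obtain ⟨A', hA', C', hC', hne, hcard⟩ := hF' hsub' 
      rw [Finset.mem_insert] at hA' hC'
      rcases hA' with rfl | hA'
      · rcases hC' with rfl | hC'
        · exact absurd rfl hne
        · exact ⟨C', hC', Finset.mem_filter.mpr ⟨hB, by rwa [Finset.inter_comm]⟩⟩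
      · rcases hC' with rfl | hC'
        · exact ⟨A', hA', Finset.mem_filter.mpr ⟨hB, hcard⟩⟩
        · exact absurd hcard (not_le.mpr (hFpair _ hA' _ hC' hne))
  -- counting bad sets per A
  have hbad : ∀ A ∈ F, (𝒮.filter (fun B => s ≤ (A ∩ B).card)).card
      ≤ 2 ^ k * ((k + 1) * (M - k).choose (k - s)) := by
    intro A hA
    have hAcard : A.card = k := (h𝒮mem A).mp (hFsub hA)
    have hAc : Aᶜ.card = M - k := by
      rw [Finset.card_compl, hAcard]; simp
    have step1 : (𝒮.filter (fun B => s ≤ (A ∩ B).card)).card ≤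
        (A.powerset ×ˢ (Aᶜ.powerset.filter (fun Q => Q.card ≤ k - s))).card := by
      apply Finset.card_le_card_of_injOn (fun B => (B ∩ A, B \ A))
      · intro B hB
        dsimp only
        rw [Finset.mem_coe, Finset.mem_filter] at hB
        obtain ⟨hB𝒮, hBs⟩ := hB
        have hBcard : B.card = k := (h𝒮mem B).mp hB𝒮
        rw [Finset.mem_coe, Finset.mem_product, Finset.mem_powerset, Finset.mem_filter,
          Finset.mem_powerset]
        refine ⟨Finset.inter_subset_right, ?_, ?_⟩
        · intro x hx
          rw [Finset.mem_sdiff] at hx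
          rw [Finset.mem_compl]
          exact hx.2
        · show (B \ A).card ≤ k - s
          have := Finset.card_inter_add_card_sdiff B A
          rw [Finset.inter_comm A B] at hBs
          omega
      · intro B hB B' hB' h
        dsimp only at h
        rw [Prod.mk.injEq] at h
        obtain ⟨h1, h2⟩ := h
        have e : ∀ C : Finset (Fin M), C ∩ A ∪ C \ A = C := by
          intro C; ext x; simp only [Finset.mem_union, Finset.mem_inter,
            Finset.mem_sdiff]; tauto
        rw [← e B, ← e B', h1, h2]
    have step2 : (Aᶜ.powerset.filter (fun Q => Q.card ≤ k - s)).card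
        ≤ (k + 1) * (M - k).choose (k - s) := by
      have hsub : Aᶜ.powerset.filter (fun Q => Q.card ≤ k - s) ⊆
          (Finset.range (k - s + 1)).biUnion (fun m => Finset.powersetCard m Aᶜ) := by
        intro Q hQ
        rw [Finset.mem_filter, Finset.mem_powerset] at hQ
        rw [Finset.mem_biUnion]
        exact ⟨Q.card, Finset.mem_range.mpr (by omega),
          Finset.mem_powersetCard.mpr ⟨hQ.1, rfl⟩⟩
      calc (Aᶜ.powerset.filter (fun Q => Q.card ≤ k - s)).card
          ≤ ((Finset.range (k - s + 1)).biUnion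
              (fun m => Finset.powersetCard m Aᶜ)).card := Finset.card_le_card hsub
        _ ≤ ∑ m ∈ Finset.range (k - s + 1), (Finset.powersetCard m Aᶜ).card :=
            Finset.card_biUnion_le
        _ = ∑ m ∈ Finset.range (k - s + 1), (M - k).choose m := by
            apply Finset.sum_congr rfl
            intro m _
            rw [Finset.card_powersetCard, hAc]
        _ ≤ ∑ m ∈ Finset.range (k - s + 1), (M - k).choose (k - s) := by
            apply Finset.sum_le_sum
            intro m hm
            rw [Finset.mem_range] at hm
            exact lober_choose_mono (by omega) (by omega)
        _ = (k - s + 1) * (M - k).choose (k - s) := by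
            rw [Finset.sum_const, Finset.card_range, smul_eq_mul]
        _ ≤ (k + 1) * (M - k).choose (k - s) :=
            Nat.mul_le_mul_right _ (by omega)
    calc (𝒮.filter (fun B => s ≤ (A ∩ B).card)).card
        ≤ (A.powerset ×ˢ (Aᶜ.powerset.filter (fun Q => Q.card ≤ k - s))).card := step1
      _ = 2 ^ k * (Aᶜ.powerset.filter (fun Q => Q.card ≤ k - s)).card := by
          rw [Finset.card_product, Finset.card_powerset, hAcard]
      _ ≤ 2 ^ k * ((k + 1) * (M - k).choose (k - s)) :=
          Nat.mul_le_mul_left _ step2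
  -- total count
  have total : M.choose k ≤ F.card * (2 ^ k * ((k + 1) * (M - k).choose (k - s))) := by
    have h𝒮card : 𝒮.card = M.choose k := by
      rw [h𝒮def, Finset.card_powersetCard, Finset.card_univ, Fintype.card_fin]
    calc M.choose k = 𝒮.card := h𝒮card.symm
      _ ≤ (F.biUnion (fun A => 𝒮.filter (fun B => s ≤ (A ∩ B).card))).card :=
          Finset.card_le_card cover
      _ ≤ ∑ A ∈ F, (𝒮.filter (fun B => s ≤ (A ∩ B).card)).card :=
          Finset.card_biUnion_le
      _ ≤ ∑ A ∈ F, 2 ^ k * ((k + 1) * (M - k).choose (k - s)) :=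
          Finset.sum_le_sum hbad
      _ = F.card * (2 ^ k * ((k + 1) * (M - k).choose (k - s))) := by
          rw [Finset.sum_const, smul_eq_mul]
  -- real-number chain
  set Cb : ℝ := ((M - k).choose (k - s) : ℝ) with hCbdef
  have hCb1 : (1 : ℝ) ≤ Cb := by
    rw [hCbdef]
    have : 0 < (M - k).choose (k - s) := Nat.choose_pos (by omega)
    exact_mod_cast this
  have hCb0 : (0 : ℝ) ≤ Cb := by linarith
  have r2 : c ^ s * Cb ≤ (M.choose k : ℝ) := by
    have h1 : c ^ s * ((M.choose (k - s) : ℝ)) ≤ (M.choose k : ℝ) :=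
      lober_choose_ratio hkM (le_of_lt hcpos) hck s hsk
    have h2 : Cb ≤ (M.choose (k - s) : ℝ) := by
      rw [hCbdef]
      exact_mod_cast Nat.choose_le_choose (k - s) (Nat.sub_le M k)
    have : c ^ s * Cb ≤ c ^ s * (M.choose (k - s) : ℝ) :=
      mul_le_mul_of_nonneg_left h2 (by positivity)
    linarith
  have r3 : (4 : ℝ) ^ k ≤ c ^ s := by
    have hc1 : (1 : ℝ) ≤ c := by linarith
    have e1 : c ^ s = c ^ ((s : ℕ) : ℝ) := (Real.rpow_natCast c s).symm
    have e2 : c ^ ((ε * k : ℝ)) ≤ c ^ ((s : ℕ) : ℝ) :=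
      Real.rpow_le_rpow_of_exponent_le hc1 hes
    have e3 : (2 : ℝ) ^ (Real.logb 2 c * (ε * k)) = c ^ (ε * k : ℝ) := by
      rw [Real.rpow_mul (by norm_num : (0:ℝ) ≤ 2),
        Real.rpow_logb (by norm_num : (0:ℝ) < 2) (by norm_num : (2:ℝ) ≠ 1) hcpos]
    have e4 : (2 : ℝ) ^ ((2 * k : ℕ) : ℝ) ≤ (2 : ℝ) ^ (Real.logb 2 c * (ε * k)) := by
      apply Real.rpow_le_rpow_of_exponent_le (by norm_num)
      push_cast
      nlinarith
    have e5 : (2 : ℝ) ^ ((2 * k : ℕ) : ℝ) = (4 : ℝ) ^ k := by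
      rw [Real.rpow_natCast, pow_mul]; norm_num
    calc (4 : ℝ) ^ k = (2 : ℝ) ^ ((2 * k : ℕ) : ℝ) := e5.symm
      _ ≤ (2 : ℝ) ^ (Real.logb 2 c * (ε * k)) := e4
      _ = c ^ (ε * k : ℝ) := e3
      _ ≤ c ^ ((s : ℕ) : ℝ) := e2
      _ = c ^ s := e1.symm
  have r4 : (k : ℝ) + 1 ≤ M := by exact_mod_cast hk1M
  set D : ℝ := 2 ^ k * (((k : ℝ) + 1) * Cb) with hDdef
  have hD : 0 < D := by positivity
  have r1 : (M.choose k : ℝ) ≤ F.card * D := by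
    have h := (Nat.cast_le (α := ℝ)).mpr total
    push_cast at h
    rw [hDdef, hCbdef]
    linarith [h]
  have key : (2 : ℝ) ^ k * D ≤ (M : ℝ) * F.card * D := by
    calc (2 : ℝ) ^ k * D = ((k : ℝ) + 1) * ((4 : ℝ) ^ k * Cb) := by
          rw [hDdef, show (4 : ℝ) = 2 * 2 by norm_num, mul_pow]; ring
      _ ≤ (M : ℝ) * ((4 : ℝ) ^ k * Cb) := by
          apply mul_le_mul_of_nonneg_right r4 (by positivity)
      _ ≤ (M : ℝ) * (c ^ s * Cb) := by
          apply mul_le_mul_of_nonneg_left _ (le_of_lt hMpos)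
          exact mul_le_mul_of_nonneg_right r3 hCb0
      _ ≤ (M : ℝ) * (M.choose k : ℝ) :=
          mul_le_mul_of_nonneg_left r2 (le_of_lt hMpos)
      _ ≤ (M : ℝ) * (F.card * D) :=
          mul_le_mul_of_nonneg_left r1 (le_of_lt hMpos)
      _ = (M : ℝ) * F.card * D := by ring
  have hfinal : (2 : ℝ) ^ k ≤ (M : ℝ) * F.card :=
    le_of_mul_le_mul_right (by linarith) hD
  -- build the answer
  refine ⟨F.card, fun i => (F.equivFin.symm i : Finset (Fin M)), ?_, ?_, ?_, ?_⟩
  · rw [div_mul_eq_mul_div, one_mul, div_le_iff₀ hMpos]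
    linarith
  · exact Subtype.val_injective.comp F.equivFin.symm.injective
  · intro i
    exact (h𝒮mem _).mp (hFsub (F.equivFin.symm i).2)
  · intro i j hij
    have hne : ((F.equivFin.symm i : Finset (Fin M))) ≠ (F.equivFin.symm j : Finset (Fin M)) := by
      intro h
      exact hij (F.equivFin.symm.injective (Subtype.val_injective h))
    have hlt := hFpair _ (F.equivFin.symm i).2 _ (F.equivFin.symm j).2 hne
    have h1 : ((F.equivFin.symm i : Finset (Fin M)) ∩ (F.equivFin.symm j : Finset (Fin M))).card
        ≤ ⌊ε * k⌋₊ := by omega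
    calc (((F.equivFin.symm i : Finset (Fin M)) ∩ (F.equivFin.symm j : Finset (Fin M))).card : ℝ)
        ≤ (⌊ε * k⌋₊ : ℝ) := by exact_mod_cast h1
      _ ≤ ε * k := Nat.floor_le (by positivity)
end

section
/- One-shot construction of a simultaneous ID-code from a transmission code: let X, Y be finite sets, d ∈ ℕ, and ρ : X × Y → S(ℂ^d) a map into density matrices. Let ε_1, ε_2 ∈ (0,1), set ε := min{ε_1, ε_2/4}, and let λ > 0 satisfy ε·log₂(1/λ − 1) > 2. Suppose (P_i, Q_j, D_{ij})_{i∈[M], j∈[N]} is a code where each P_i is a probability distribution on X, each Q_j is a probability distribution on Y, the D_{ij} are positive semidefinite with Σ_{i,j} D_{ij} = 𝟙, and for all i ∈ [M], j ∈ [N]: Σ_{x,y} P_i(x)Q_j(y) tr(D_{ij} ρ(x,y)) ≥ 1 − ε. Then there exist M' ≥ (1/M)·2^{⌊λM⌋} and N' ≥ (1/N)·2^{⌊λN⌋}, subsets A_1,...,A_{M'} ⊆ [M] and B_1,...,B_{N'} ⊆ [N], probability distributions P'_m := (1/|A_m|) Σ_{i∈A_m} P_i on X and Q'_n := (1/|B_n|)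 Σ_{j∈B_n} Q_j on Y, and operators I_{mn} := Σ_{i∈A_m} Σ_{j∈B_n} D_{ij}, such that: (a) for all m ∈ [M'], n ∈ [N']: 1 − Σ_{x,y} P'_m(x)Q'_n(y) tr(I_{mn} ρ(x,y)) ≤ ε_1; and (b) for all (m,n) ≠ (a,b) with m,a ∈ [M'], n,b ∈ [N']: Σ_{x,y} P'_m(x)Q'_n(y) tr(I_{ab} ρ(x,y)) ≤ ε_2. -/
open Matrix BigOperators
open scoped ComplexOrder

/-- A density matrix: positive semidefinite with trace one. -/
def IsDensityMatrix {d : ℕ} (ρ : Matrix (Fin d) (Fin d) ℂ) : Prop :=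
  ρ.PosSemidef ∧ ρ.trace = 1

section AuxOneShotId
open Finset
set_option maxHeartbeats 1000000

lemma re_trace_conjTranspose_mul_self_nonneg {d : ℕ} (M : Matrix (Fin d) (Fin d) ℂ) :
    0 ≤ ((Mᴴ * M).trace).re := by
  rw [Matrix.trace]
  simp only [Matrix.diag, Matrix.mul_apply, Matrix.conjTranspose_apply, Complex.re_sum]
  refine Finset.sum_nonneg fun j _ => Finset.sum_nonneg fun k _ => ?_
  rw [show star (M k j) = (starRingEnd ℂ) (M k j) from rfl, ← Complex.normSq_eq_conj_mul_self]
  exact Complex.normSq_nonneg _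

lemma re_trace_mul_nonneg {d : ℕ} {A B : Matrix (Fin d) (Fin d) ℂ}
    (hA : A.PosSemidef) (hB : B.PosSemidef) : 0 ≤ ((A * B).trace).re := by
  obtain ⟨E, rfl⟩ : ∃ E : Matrix (Fin d) (Fin d) ℂ, A = Eᴴ * E := by
    open scoped MatrixOrder in
    exact CStarAlgebra.nonneg_iff_eq_star_mul_self.mp hA.nonneg
  obtain ⟨F, rfl⟩ : ∃ F : Matrix (Fin d) (Fin d) ℂ, B = Fᴴ * F := by
    open scoped MatrixOrder in
    exact CStarAlgebra.nonneg_iff_eq_star_mul_self.mp hB.nonneg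
  have key : (Eᴴ * E * (Fᴴ * F)).trace = ((E * Fᴴ)ᴴ * (E * Fᴴ)).trace := by
    rw [Matrix.conjTranspose_mul, Matrix.conjTranspose_conjTranspose]
    conv_rhs => rw [show F * Eᴴ * (E * Fᴴ) = F * (Eᴴ * E * Fᴴ) by
        simp only [Matrix.mul_assoc], Matrix.trace_mul_comm]
    simp only [Matrix.mul_assoc]
  rw [key]
  exact re_trace_conjTranspose_mul_self_nonneg _

lemma pull_out_sum {α β ι : Type*} [Fintype α] [Fintype β] (S : Finset ι) (v : α → β → ι → ℝ) :
    ∑ x : α, ∑ y : β, ∑ i ∈ S, v x y i = ∑ i ∈ S, ∑ x : α, ∑ y : β, v x y i := by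
  calc ∑ x : α, ∑ y : β, ∑ i ∈ S, v x y i
      = ∑ x : α, ∑ i ∈ S, ∑ y : β, v x y i :=
        Finset.sum_congr rfl fun x _ => Finset.sum_comm
    _ = ∑ i ∈ S, ∑ x : α, ∑ y : β, v x y i := Finset.sum_comm

lemma sum_swap_xy {α β ι κ σ τ : Type*} [Fintype α] [Fintype β]
    (S₁ : Finset ι) (S₂ : Finset κ) (S₃ : Finset σ) (S₄ : Finset τ)
    (u : α → β → ι → κ → σ → τ → ℝ) :
    ∑ x : α, ∑ y : β, ∑ i ∈ S₁, ∑ j ∈ S₂, ∑ a ∈ S₃, ∑ b ∈ S₄, u x y i j a b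
    = ∑ i ∈ S₁, ∑ j ∈ S₂, ∑ a ∈ S₃, ∑ b ∈ S₄, ∑ x : α, ∑ y : β, u x y i j a b := by
  rw [pull_out_sum S₁]
  refine Finset.sum_congr rfl fun i _ => ?_
  rw [pull_out_sum S₂]
  refine Finset.sum_congr rfl fun j _ => ?_
  rw [pull_out_sum S₃]
  refine Finset.sum_congr rfl fun a _ => ?_
  rw [pull_out_sum S₄]

lemma alg_expand {ι κ σ τ : Type*} (S₁ : Finset ι) (S₂ : Finset κ) (S₃ : Finset σ) (S₄ : Finset τ)
    (c₁ c₂ : ℝ) (f : ι → ℝ) (g : κ → ℝ) (h : σ → τ → ℝ) :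
    (c₁ * ∑ i ∈ S₁, f i) * (c₂ * ∑ j ∈ S₂, g j) * (∑ a ∈ S₃, ∑ b ∈ S₄, h a b)
    = c₁ * (c₂ * ∑ i ∈ S₁, ∑ j ∈ S₂, ∑ a ∈ S₃, ∑ b ∈ S₄, f i * g j * h a b) := by
  calc (c₁ * ∑ i ∈ S₁, f i) * (c₂ * ∑ j ∈ S₂, g j) * (∑ a ∈ S₃, ∑ b ∈ S₄, h a b)
      = c₁ * (c₂ * (((∑ i ∈ S₁, f i) * (∑ j ∈ S₂, g j)) * (∑ a ∈ S₃, ∑ b ∈ S₄, h a b))) := by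
        ring
    _ = c₁ * (c₂ * ((∑ i ∈ S₁, ∑ j ∈ S₂, f i * g j) * (∑ a ∈ S₃, ∑ b ∈ S₄, h a b))) := by
        rw [Finset.sum_mul_sum]
    _ = c₁ * (c₂ * (∑ i ∈ S₁, ∑ j ∈ S₂, (f i * g j) * (∑ a ∈ S₃, ∑ b ∈ S₄, h a b))) := by
        simp only [Finset.sum_mul]
    _ = c₁ * (c₂ * ∑ i ∈ S₁, ∑ j ∈ S₂, ∑ a ∈ S₃, ∑ b ∈ S₄, f i * g j * h a b) := by
        simp only [Finset.mul_sum]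


lemma sum_subset_bound {M N : ℕ} (t : Fin M → Fin N → ℝ) (i : Fin M) (j : Fin N) (ε : ℝ)
    (h0 : ∀ a b, 0 ≤ t a b) (hsum : ∑ a, ∑ b, t a b = 1) (hdiag : 1 - ε ≤ t i j)
    (Sa : Finset (Fin M)) (Sb : Finset (Fin N)) :
    ∑ a ∈ Sa, ∑ b ∈ Sb, t a b ≤ ε + (if i ∈ Sa ∧ j ∈ Sb then (1:ℝ) else 0) := by
  classical
  set u : Fin M × Fin N → ℝ := fun p => t p.1 p.2 with hu
  have huniv : ∑ p : Fin M × Fin N, u p = 1 := by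
    rw [Fintype.sum_prod_type]; exact hsum
  have hW : ∑ a ∈ Sa, ∑ b ∈ Sb, t a b = ∑ p ∈ Sa ×ˢ Sb, u p := by rw [Finset.sum_product]
  have hu0 : ∀ p, 0 ≤ u p := fun p => h0 _ _
  have herase : ∑ p ∈ (Finset.univ : Finset (Fin M × Fin N)).erase (i,j), u p = 1 - u (i,j) := by
    have := Finset.sum_erase_add Finset.univ u (Finset.mem_univ (i,j))
    linarith
  have hle1 : u (i,j) ≤ 1 := by
    have h := Finset.sum_nonneg
      (fun p (_ : p ∈ (Finset.univ : Finset (Fin M × Fin N)).erase (i,j)) => hu0 p)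
    linarith
  have hdiag' : 1 - ε ≤ u (i,j) := hdiag
  have hsmall : ∑ p ∈ ((Sa ×ˢ Sb).erase (i,j)), u p ≤ ε := by
    have hsub : (Sa ×ˢ Sb).erase (i,j) ⊆ (Finset.univ : Finset (Fin M × Fin N)).erase (i,j) :=
      Finset.erase_subset_erase _ (Finset.subset_univ _)
    have h2 := Finset.sum_le_sum_of_subset_of_nonneg hsub (fun p _ _ => hu0 p)
    linarith
  rw [hW]
  by_cases hmem : (i,j) ∈ Sa ×ˢ Sb
  · have hcond : i ∈ Sa ∧ j ∈ Sb := Finset.mem_product.mp hmem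
    rw [if_pos hcond]
    have := Finset.sum_erase_add (Sa ×ˢ Sb) u hmem
    linarith
  · have hcond : ¬(i ∈ Sa ∧ j ∈ Sb) := fun h => hmem (Finset.mem_product.mpr h)
    rw [if_neg hcond, add_zero, ← Finset.erase_eq_of_notMem hmem]
    exact hsmall

lemma count_lemma {M N : ℕ} (Sm Sa : Finset (Fin M)) (Sn Sb : Finset (Fin N)) :
    ∑ i ∈ Sm, ∑ j ∈ Sn, (if i ∈ Sa ∧ j ∈ Sb then (1:ℝ) else 0)
    = ((Sm ∩ Sa).card : ℝ) * ((Sn ∩ Sb).card : ℝ) := by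
  classical
  have h1 : ∀ (i : Fin M) (j : Fin N), (if i ∈ Sa ∧ j ∈ Sb then (1:ℝ) else 0)
      = (if i ∈ Sa then (1:ℝ) else 0) * (if j ∈ Sb then (1:ℝ) else 0) := by
    intro i j; by_cases h : i ∈ Sa <;> by_cases h' : j ∈ Sb <;> simp [h, h']
  simp only [h1]
  rw [← Finset.sum_mul_sum]
  congr 1
  · rw [Finset.sum_boole, Finset.filter_mem_eq_inter]
  · rw [Finset.sum_boole, Finset.filter_mem_eq_inter]

lemma trace_expand {d M N : ℕ} (D : Fin M → Fin N → Matrix (Fin d) (Fin d) ℂ)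
    (R : Matrix (Fin d) (Fin d) ℂ) (Sa : Finset (Fin M)) (Sb : Finset (Fin N)) :
    (((∑ a ∈ Sa, ∑ b ∈ Sb, D a b) * R).trace).re
    = ∑ a ∈ Sa, ∑ b ∈ Sb, ((D a b * R).trace).re := by
  simp only [Finset.sum_mul, Matrix.trace_sum, Complex.re_sum]

lemma expand_lemma {X Y : Type} [Fintype X] [Fintype Y] {d M N : ℕ}
    (ρ : X → Y → Matrix (Fin d) (Fin d) ℂ) (P : Fin M → X → ℝ) (Q : Fin N → Y → ℝ)
    (D : Fin M → Fin N → Matrix (Fin d) (Fin d) ℂ)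
    (Sm Sa : Finset (Fin M)) (Sn Sb : Finset (Fin N)) (c₁ c₂ : ℝ) :
    ∑ x : X, ∑ y : Y, (c₁ * ∑ i ∈ Sm, P i x) * (c₂ * ∑ j ∈ Sn, Q j y) *
        (((∑ a ∈ Sa, ∑ b ∈ Sb, D a b) * ρ x y).trace).re
    = c₁ * (c₂ * ∑ i ∈ Sm, ∑ j ∈ Sn, ∑ a ∈ Sa, ∑ b ∈ Sb,
        ∑ x : X, ∑ y : Y, P i x * Q j y * ((D a b * ρ x y).trace).re) := by
  have step1 : ∀ (x : X) (y : Y), (c₁ * ∑ i ∈ Sm, P i x) * (c₂ * ∑ j ∈ Sn, Q j y) *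
        (((∑ a ∈ Sa, ∑ b ∈ Sb, D a b) * ρ x y).trace).re
      = c₁ * (c₂ * ∑ i ∈ Sm, ∑ j ∈ Sn, ∑ a ∈ Sa, ∑ b ∈ Sb,
          P i x * Q j y * ((D a b * ρ x y).trace).re) := by
    intro x y
    rw [trace_expand, alg_expand]
  calc ∑ x : X, ∑ y : Y, (c₁ * ∑ i ∈ Sm, P i x) * (c₂ * ∑ j ∈ Sn, Q j y) *
        (((∑ a ∈ Sa, ∑ b ∈ Sb, D a b) * ρ x y).trace).re
      = ∑ x : X, ∑ y : Y, c₁ * (c₂ * ∑ i ∈ Sm, ∑ j ∈ Sn, ∑ a ∈ Sa, ∑ b ∈ Sb,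
          P i x * Q j y * ((D a b * ρ x y).trace).re) := by
        exact Finset.sum_congr rfl fun x _ => Finset.sum_congr rfl fun y _ => step1 x y
    _ = c₁ * (c₂ * ∑ x : X, ∑ y : Y, ∑ i ∈ Sm, ∑ j ∈ Sn, ∑ a ∈ Sa, ∑ b ∈ Sb,
          P i x * Q j y * ((D a b * ρ x y).trace).re) := by
        simp only [← Finset.mul_sum]
    _ = c₁ * (c₂ * ∑ i ∈ Sm, ∑ j ∈ Sn, ∑ a ∈ Sa, ∑ b ∈ Sb, ∑ x : X, ∑ y : Y,
          P i x * Q j y * ((D a b * ρ x y).trace).re) := by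
        rw [sum_swap_xy]

lemma choose_mono_half {n : ℕ} : ∀ {j l : ℕ}, j ≤ l → 2 * l ≤ n → n.choose j ≤ n.choose l := by
  intro j l hjl hln
  induction l with
  | zero => simp_all
  | succ l ih =>
    rcases Nat.eq_or_lt_of_le hjl with rfl | h
    · exact le_rfl
    · calc n.choose j ≤ n.choose l := ih (by omega) (by omega)
        _ ≤ n.choose (l+1) := Nat.choose_le_succ_of_lt_half_left (by omega)

lemma rbasics (ε lam : ℝ) (hε0 : 0 < ε) (hε1 : ε < 1)
    (hlam : 0 < lam) (hcond : 2 < ε * Real.logb 2 (1 / lam - 1)) :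
    4 < 1 / lam - 1 ∧ lam < 1/5 ∧ 2 < Real.logb 2 (1 / lam - 1) := by
  have hL0 : 0 < Real.logb 2 (1 / lam - 1) := by nlinarith
  have hr0 : 0 < 1 / lam - 1 := by
    by_contra h
    push_neg at h
    have hgt : -1 < 1 / lam - 1 := by
      have : 0 < 1 / lam := by positivity
      linarith
    have : Real.log (1 / lam - 1) ≤ 0 := by
      rcases lt_or_eq_of_le h with h' | h'
      · rw [← Real.log_neg_eq_log, ← neg_neg (1/lam - 1)] at *
        exact le_of_lt (Real.log_neg (by linarith) (by linarith))
      · rw [show (1:ℝ)/lam - 1 = 0 from h', Real.log_zero]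
    have : Real.logb 2 (1 / lam - 1) ≤ 0 := by
      rw [Real.logb]
      exact div_nonpos_of_nonpos_of_nonneg this (Real.log_nonneg (by norm_num))
    linarith
  have hL2 : 2 < Real.logb 2 (1 / lam - 1) := by nlinarith
  have hrL : 1 / lam - 1 = (2:ℝ) ^ (Real.logb 2 (1/lam - 1)) :=
    (Real.rpow_logb two_pos (by norm_num) hr0).symm
  have hr4 : 4 < 1 / lam - 1 := by
    have h4 : (4:ℝ) = (2:ℝ) ^ (2:ℝ) := by
      rw [show (2:ℝ) = ((2:ℕ):ℝ) by norm_num, Real.rpow_natCast]; norm_num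
    rw [hrL, h4]
    exact Real.rpow_lt_rpow_left_iff (by norm_num) |>.mpr hL2
  refine ⟨hr4, ?_, hL2⟩
  have h5 : 5 < 1 / lam := by linarith
  rw [lt_div_iff₀ hlam] at h5
  linarith

lemma exists_id_family (M : ℕ) (ε lam : ℝ) (hε0 : 0 < ε) (hε1 : ε < 1)
    (hlam : 0 < lam) (hcond : 2 < ε * Real.logb 2 (1 / lam - 1)) :
    ∃ (M' : ℕ) (A : Fin M' → Finset (Fin M)),
      ((1 : ℝ) / M) * 2 ^ (⌊lam * M⌋₊) ≤ (M' : ℝ) ∧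
      (∀ m, (A m).Nonempty) ∧
      (∀ m a, m ≠ a → (((A m ∩ A a).card : ℝ)) ≤ ε * ((A m).card)) := by
  classical
  obtain ⟨hr4, hlam5, hL2⟩ := rbasics ε lam hε0 hε1 hlam hcond
  set k : ℕ := ⌊lam * M⌋₊ with hk
  by_cases hk0 : k = 0
  · -- trivial family
    by_cases hM : M = 0
    · refine ⟨0, Fin.elim0, ?_, fun m => m.elim0, fun m a _ => m.elim0⟩
      simp [hM]
    · refine ⟨1, fun _ => {⟨0, Nat.pos_of_ne_zero hM⟩}, ?_, fun m => ⟨_, Finset.mem_singleton_self _⟩,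
        fun m a hma => absurd (Subsingleton.elim m a) hma⟩
      rw [hk0]
      have h1M : (1:ℝ) ≤ M := by exact_mod_cast Nat.one_le_iff_ne_zero.mpr hM
      simp only [pow_zero, mul_one, Nat.cast_one]
      rw [div_le_one (by linarith)]
      linarith
  · -- main case
    have hkpos : 0 < k := Nat.pos_of_ne_zero hk0
    have hMpos : 0 < M := by
      rcases Nat.eq_zero_or_pos M with h | h
      · exfalso; apply hk0; rw [hk, h]; simp
      · exact h
    have hkR : (k : ℝ) ≤ lam * M := Nat.floor_le (by positivity)
    have hM0R : (0:ℝ) < M := by exact_mod_cast hMpos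
    have h5k : 5 * (k:ℝ) < M := by nlinarith [mul_pos (show (0:ℝ) < 1/5 - lam by linarith) hM0R]
    have h5kn : 5 * k < M := by exact_mod_cast h5k
    have hkM : k < M := by omega
    set s : ℕ := ⌈ε * k⌉₊ with hs
    have hs1 : 1 ≤ s := Nat.one_le_iff_ne_zero.mpr (by
      simp only [hs, ne_eq, Nat.ceil_eq_zero, not_le]
      positivity)
    have hsk : s ≤ k := Nat.ceil_le.mpr (by nlinarith [show (0:ℝ) ≤ (k:ℝ) from Nat.cast_nonneg k])
    -- maximal good family
    set Good : Finset (Finset (Fin M)) → Prop :=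
      fun F => (∀ A ∈ F, A.card = k) ∧
        ∀ A ∈ F, ∀ B ∈ F, A ≠ B → (A ∩ B).card < s with hGood
    obtain ⟨F, hFS, hFmax⟩ := Finset.exists_max_image
      ((Finset.univ : Finset (Finset (Finset (Fin M)))).filter Good) Finset.card
      ⟨∅, by simp [hGood]⟩
    rw [Finset.mem_filter] at hFS
    have hF : Good F := hFS.2
    -- covering property
    have cover : ∀ B ∈ Finset.powersetCard k (Finset.univ : Finset (Fin M)),
        ∃ A ∈ F, s ≤ (A ∩ B).card := by
      intro B hB
      by_contra hcon
      push_neg at hcon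
      have hBk : B.card = k := (Finset.mem_powersetCard.mp hB).2
      have hBF : B ∉ F := by
        intro hBF
        have := hcon B hBF
        rw [Finset.inter_self, hBk] at this
        omega
      have hins : Good (insert B F) := by
        constructor
        · intro A hA
          rcases Finset.mem_insert.mp hA with rfl | hA
          · exact hBk
          · exact hF.1 A hA
        · intro A₁ h₁ A₂ h₂ hne
          rcases Finset.mem_insert.mp h₁ with rfl | hh₁
          · rcases Finset.mem_insert.mp h₂ with rfl | hh₂
            · exact absurd rfl hne
            · rw [Finset.inter_comm]; exact hcon A₂ hh₂
          · rcases Finset.mem_insert.mp h₂ with rfl | hh₂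
            · exact hcon A₁ hh₁
            · exact hF.2 A₁ hh₁ A₂ hh₂ hne
      have hle := hFmax (insert B F) (Finset.mem_filter.mpr ⟨Finset.mem_univ _, hins⟩)
      rw [Finset.card_insert_of_notMem hBF] at hle
      omega
    -- counting
    have badbound : ∀ A : Finset (Fin M), A.card = k →
        ((Finset.powersetCard k (Finset.univ : Finset (Fin M))).filter
          (fun B => s ≤ (A ∩ B).card)).card ≤ 2^k * ((k - s + 1) * M.choose (k - s)) := by
      intro A hA
      have hinj : ∀ B₁ ∈ (Finset.powersetCard k (Finset.univ : Finset (Fin M))).filter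
          (fun B => s ≤ (A ∩ B).card), ∀ B₂ ∈ (Finset.powersetCard k
          (Finset.univ : Finset (Fin M))).filter (fun B => s ≤ (A ∩ B).card),
          (B₁ ∩ A, B₁ \ A) = (B₂ ∩ A, B₂ \ A) → B₁ = B₂ := by
        intro B₁ _ B₂ _ h
        have h1 := congrArg Prod.fst h
        have h2 := congrArg Prod.snd h
        simp only at h1 h2
        rw [← Finset.sdiff_union_inter B₁ A, ← Finset.sdiff_union_inter B₂ A, h1, h2]
      have hmaps : ∀ B ∈ (Finset.powersetCard k (Finset.univ : Finset (Fin M))).filter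
          (fun B => s ≤ (A ∩ B).card),
          (B ∩ A, B \ A) ∈ A.powerset ×ˢ ((Finset.range (k - s + 1)).biUnion
            (fun j => Finset.powersetCard j (Finset.univ : Finset (Fin M)))) := by
        intro B hB
        rw [Finset.mem_filter, Finset.mem_powersetCard] at hB
        obtain ⟨⟨_, hBk⟩, hAB⟩ := hB
        rw [Finset.mem_product]
        constructor
        · exact Finset.mem_powerset.mpr Finset.inter_subset_right
        · rw [Finset.mem_biUnion]
          refine ⟨(B \ A).card, ?_, Finset.mem_powersetCard.mpr ⟨Finset.subset_univ _, rfl⟩⟩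
          rw [Finset.mem_range]
          have hcard : (B \ A).card + (A ∩ B).card = k := by
            rw [Finset.inter_comm, ← hBk]
            exact Finset.card_sdiff_add_card_inter B A
          omega
      calc ((Finset.powersetCard k (Finset.univ : Finset (Fin M))).filter
            (fun B => s ≤ (A ∩ B).card)).card
          ≤ (A.powerset ×ˢ ((Finset.range (k - s + 1)).biUnion
            (fun j => Finset.powersetCard j (Finset.univ : Finset (Fin M))))).card :=
            Finset.card_le_card_of_injOn _ hmaps hinj
        _ ≤ 2^k * ((k - s + 1) * M.choose (k - s)) := by
            rw [Finset.card_product, Finset.card_powerset, hA]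
            refine Nat.mul_le_mul le_rfl ?_
            calc ((Finset.range (k - s + 1)).biUnion
                (fun j => Finset.powersetCard j (Finset.univ : Finset (Fin M)))).card
                ≤ ∑ j ∈ Finset.range (k - s + 1),
                  (Finset.powersetCard j (Finset.univ : Finset (Fin M))).card :=
                  Finset.card_biUnion_le
              _ ≤ ∑ j ∈ Finset.range (k - s + 1), M.choose (k - s) := by
                  refine Finset.sum_le_sum fun j hj => ?_
                  rw [Finset.card_powersetCard, Finset.card_univ, Fintype.card_fin]
                  exact choose_mono_half (by rw [Finset.mem_range] at hj; omega) (by omega)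
              _ = (k - s + 1) * M.choose (k - s) := by
                  rw [Finset.sum_const, Finset.card_range, smul_eq_mul]
    -- total count
    have countle : M.choose k ≤ F.card * (2^k * ((k - s + 1) * M.choose (k - s))) := by
      have hsub : Finset.powersetCard k (Finset.univ : Finset (Fin M)) ⊆
          F.biUnion (fun A => (Finset.powersetCard k (Finset.univ : Finset (Fin M))).filter
            (fun B => s ≤ (A ∩ B).card)) := by
        intro B hB
        obtain ⟨A, hAF, hAB⟩ := cover B hB
        exact Finset.mem_biUnion.mpr ⟨A, hAF, Finset.mem_filter.mpr ⟨hB, hAB⟩⟩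
      calc M.choose k = (Finset.powersetCard k (Finset.univ : Finset (Fin M))).card := by
            rw [Finset.card_powersetCard, Finset.card_univ, Fintype.card_fin]
        _ ≤ (F.biUnion (fun A => (Finset.powersetCard k (Finset.univ : Finset (Fin M))).filter
            (fun B => s ≤ (A ∩ B).card))).card := Finset.card_le_card hsub
        _ ≤ ∑ A ∈ F, ((Finset.powersetCard k (Finset.univ : Finset (Fin M))).filter
            (fun B => s ≤ (A ∩ B).card)).card := Finset.card_biUnion_le
        _ ≤ ∑ A ∈ F, 2^k * ((k - s + 1) * M.choose (k - s)) :=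
            Finset.sum_le_sum fun A hA => badbound A (hF.1 A hA)
        _ = F.card * (2^k * ((k - s + 1) * M.choose (k - s))) := by
            rw [Finset.sum_const, smul_eq_mul]
    -- ratio estimate
    have step : ∀ j : ℕ, j < k → (1/lam - 1) * (M.choose j : ℝ) ≤ M.choose (j+1) := by
      intro j hj
      have hjM : j < M := by omega
      have hcast : (M.choose (j+1) : ℝ) * ((j:ℝ)+1) = (M.choose j : ℝ) * ((M:ℝ) - j) := by
        have h0 := Nat.choose_succ_right_eq M j
        have h' : ((M.choose (j+1) * (j+1) : ℕ) : ℝ) = ((M.choose j * (M - j) : ℕ) : ℝ) := by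
          rw [h0]
        push_cast [Nat.cast_sub hjM.le] at h'
        linarith
      have hineq : (1/lam - 1) * ((j:ℝ)+1) ≤ (M:ℝ) - j := by
        have hj1k : (j:ℝ) + 1 ≤ k := by exact_mod_cast hj
        have he : (1/lam - 1) * (lam * M) = (M:ℝ) - lam * M := by
          field_simp
        nlinarith [mul_le_mul_of_nonneg_left hj1k (show (0:ℝ) ≤ 1/lam - 1 by linarith),
          mul_le_mul_of_nonneg_left hkR (show (0:ℝ) ≤ 1/lam - 1 by linarith)]
      have h1 : (1/lam - 1) * (M.choose j:ℝ) * ((j:ℝ)+1) ≤ (M.choose (j+1):ℝ) * ((j:ℝ)+1) := by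
        rw [hcast]
        nlinarith [Nat.cast_nonneg (α := ℝ) (M.choose j)]
      exact le_of_mul_le_mul_right h1 (by positivity)
    have ratio : ∀ t : ℕ, t ≤ s → (1/lam - 1)^t * (M.choose (k - t) : ℝ) ≤ M.choose k := by
      intro t
      induction t with
      | zero => simp
      | succ t ih =>
        intro ht
        have hkt : k - (t+1) + 1 = k - t := by omega
        calc (1/lam - 1)^(t+1) * (M.choose (k - (t+1)) : ℝ)
            = (1/lam - 1)^t * ((1/lam - 1) * (M.choose (k - (t+1)) : ℝ)) := by ring
          _ ≤ (1/lam - 1)^t * (M.choose (k - (t+1) + 1) : ℝ) :=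
              mul_le_mul_of_nonneg_left (step _ (by omega)) (pow_nonneg (by linarith) t)
          _ = (1/lam - 1)^t * (M.choose (k - t) : ℝ) := by rw [hkt]
          _ ≤ M.choose k := ih (by omega)
    -- 2^(2k) ≤ r^s
    have hrs : (2:ℝ)^(2*k) ≤ (1/lam - 1)^s := by
      have hr0 : (0:ℝ) < 1/lam - 1 := by linarith
      have hrL : 1 / lam - 1 = (2:ℝ) ^ (Real.logb 2 (1/lam - 1)) :=
        (Real.rpow_logb two_pos (by norm_num) hr0).symm
      have h1 : ((1/lam - 1):ℝ)^(s:ℕ) = (1/lam - 1) ^ ((s:ℕ):ℝ) := (Real.rpow_natCast _ s).symm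
      have h2 : (1/lam - 1) ^ (ε * k) ≤ (1/lam - 1) ^ ((s:ℕ):ℝ) :=
        (Real.rpow_le_rpow_left_iff (by linarith : 1 < 1/lam - 1)).mpr (Nat.le_ceil _)
      have h3 : (1/lam - 1) ^ (ε * k) = (2:ℝ) ^ (Real.logb 2 (1/lam - 1) * (ε * k)) := by
        rw [hrL, ← Real.rpow_mul (by norm_num : (0:ℝ) ≤ 2)]
        rw [← hrL]
      have h4 : (2:ℝ)^((2*k : ℕ):ℝ) ≤ (2:ℝ) ^ (Real.logb 2 (1/lam - 1) * (ε * k)) := by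
        apply (Real.rpow_le_rpow_left_iff (by norm_num : (1:ℝ) < 2)).mpr
        push_cast
        nlinarith [show (0:ℝ) ≤ (k:ℝ) from Nat.cast_nonneg k]
      calc (2:ℝ)^(2*k) = (2:ℝ)^((2*k : ℕ):ℝ) := (Real.rpow_natCast _ _).symm
        _ ≤ (2:ℝ) ^ (Real.logb 2 (1/lam - 1) * (ε * k)) := h4
        _ = (1/lam - 1) ^ (ε * k) := h3.symm
        _ ≤ (1/lam - 1) ^ ((s:ℕ):ℝ) := h2
        _ = (1/lam - 1)^(s:ℕ) := h1.symm
    -- assemble the cardinality bound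
    have hckpos : (0:ℝ) < M.choose (k - s) := by
      exact_mod_cast Nat.choose_pos (show k - s ≤ M by omega)
    have hcount' : (M.choose k : ℝ) ≤ (F.card : ℝ) * (2^k * (((k - s + 1 : ℕ):ℝ) * M.choose (k - s))) := by
      exact_mod_cast countle
    have h2k : (2:ℝ)^(2*k) * (M.choose (k-s):ℝ) ≤ (M.choose k : ℝ) :=
      le_trans (mul_le_mul_of_nonneg_right hrs (Nat.cast_nonneg _)) (ratio s le_rfl)
    have h3 : (2:ℝ)^(2*k) ≤ (F.card : ℝ) * (2^k * ((k - s + 1 : ℕ):ℝ)) := by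
      have h := le_trans h2k hcount'
      have harr : (F.card : ℝ) * (2^k * (((k - s + 1 : ℕ):ℝ) * M.choose (k - s)))
          = ((F.card : ℝ) * (2^k * ((k - s + 1 : ℕ):ℝ))) * (M.choose (k-s):ℝ) := by ring
      rw [harr] at h
      exact le_of_mul_le_mul_right h hckpos
    have h4 : (2:ℝ)^k ≤ (F.card : ℝ) * ((k - s + 1 : ℕ):ℝ) := by
      have h2kk : (2:ℝ)^(2*k) = 2^k * 2^k := by rw [two_mul, pow_add]
      rw [h2kk] at h3
      have harr : (F.card : ℝ) * (2^k * ((k - s + 1 : ℕ):ℝ))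
          = ((F.card : ℝ) * ((k - s + 1 : ℕ):ℝ)) * 2^k := by ring
      rw [harr] at h3
      exact le_of_mul_le_mul_right (by linarith) (by positivity)
    have h5 : ((k - s + 1 : ℕ):ℝ) ≤ (M:ℝ) := by
      exact_mod_cast show k - s + 1 ≤ M by omega
    have h6 : (2:ℝ)^k ≤ (F.card : ℝ) * M :=
      le_trans h4 (mul_le_mul_of_nonneg_left h5 (Nat.cast_nonneg _))
    -- produce the family
    refine ⟨F.card, fun m => ((F.equivFin.symm m : F) : Finset (Fin M)), ?_, ?_, ?_⟩
    · rw [div_mul_eq_mul_div, div_le_iff₀ hM0R, one_mul]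
      exact h6
    · intro m
      refine Finset.card_pos.mp ?_
      rw [hF.1 _ (F.equivFin.symm m).2]
      exact hkpos
    · intro m a hma
      have hne : ((F.equivFin.symm m : F) : Finset (Fin M)) ≠ ((F.equivFin.symm a : F) : Finset (Fin M)) := by
        intro h
        exact hma (F.equivFin.symm.injective (Subtype.ext h))
      have hcard := hF.2 _ (F.equivFin.symm m).2 _ (F.equivFin.symm a).2 hne
      have hsceil : (s:ℝ) < ε * k + 1 := by
        have := Nat.ceil_lt_add_one (show (0:ℝ) ≤ ε * k by positivity)
        exact_mod_cast this
      have hc1 : ((((F.equivFin.symm m : F) : Finset (Fin M)) ∩ ((F.equivFin.symm a : F) : Finset (Fin M))).card : ℝ) ≤ (s:ℝ) - 1 := by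
        have : (((F.equivFin.symm m : F) : Finset (Fin M)) ∩ ((F.equivFin.symm a : F) : Finset (Fin M))).card ≤ s - 1 := by omega
        have h' : ((s:ℝ) - 1) = ((s - 1 : ℕ):ℝ) := by
          push_cast [Nat.cast_sub hs1]
          ring
        rw [h']
        exact_mod_cast this
      rw [hF.1 _ (F.equivFin.symm m).2]
      linarith

end AuxOneShotId

set_option maxHeartbeats 1000000 in
/-- **One-shot construction of a simultaneous ID-code from a transmission code.**
Given a transmission code `(P_i, Q_j, D_{ij})` with maximal error at most
`ε = min {ε₁, ε₂/4}` and `λ > 0` with `ε·log₂(1/λ − 1) > 2`, there exist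
`M' ≥ (1/M)·2^⌊λM⌋` and `N' ≥ (1/N)·2^⌊λN⌋` subsets `A_m ⊆ [M]`, `B_n ⊆ [N]` such that
the uniformly mixed encoders `P'_m`, `Q'_n` and operators `I_{mn} = ∑_{i∈A_m,j∈B_n} D_{ij}`
form an ID-code with first-kind error at most `ε₁` and second-kind error at most `ε₂`. -/
theorem one_shot_id_construction {X Y : Type} [Fintype X] [Fintype Y] {d : ℕ}
    (ρ : X → Y → Matrix (Fin d) (Fin d) ℂ)
    (hρ : ∀ x y, IsDensityMatrix (ρ x y))
    (ε₁ ε₂ : ℝ) (hε₁ : ε₁ ∈ Set.Ioo (0:ℝ) 1) (hε₂ : ε₂ ∈ Set.Ioo (0:ℝ) 1)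
    (lam : ℝ) (hlam : 0 < lam)
    (hcond : 2 < min ε₁ (ε₂ / 4) * Real.logb 2 (1 / lam - 1))
    {M N : ℕ} (P : Fin M → X → ℝ) (Q : Fin N → Y → ℝ)
    (hP : ∀ i, IsProbDist (P i)) (hQ : ∀ j, IsProbDist (Q j))
    (D : Fin M → Fin N → Matrix (Fin d) (Fin d) ℂ)
    (hD : ∀ i j, (D i j).PosSemidef)
    (hDsum : ∑ i, ∑ j, D i j = (1 : Matrix (Fin d) (Fin d) ℂ))
    (hgood : ∀ i j, 1 - min ε₁ (ε₂ / 4)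
      ≤ ∑ x, ∑ y, P i x * Q j y * ((D i j * ρ x y).trace).re) :
    ∃ (M' N' : ℕ) (A : Fin M' → Finset (Fin M)) (B : Fin N' → Finset (Fin N)),
      ((1 : ℝ) / M) * 2 ^ (⌊lam * M⌋₊) ≤ (M' : ℝ) ∧
      ((1 : ℝ) / N) * 2 ^ (⌊lam * N⌋₊) ≤ (N' : ℝ) ∧
      (∀ m, (A m).Nonempty) ∧ (∀ n, (B n).Nonempty) ∧
      (∀ m, IsProbDist (fun x => ((1 : ℝ) / (A m).card) * ∑ i ∈ A m, P i x)) ∧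
      (∀ n, IsProbDist (fun y => ((1 : ℝ) / (B n).card) * ∑ j ∈ B n, Q j y)) ∧
      (∀ m n, 1 - ∑ x, ∑ y,
          (((1 : ℝ) / (A m).card) * ∑ i ∈ A m, P i x) *
          (((1 : ℝ) / (B n).card) * ∑ j ∈ B n, Q j y) *
          (((∑ i ∈ A m, ∑ j ∈ B n, D i j) * ρ x y).trace).re ≤ ε₁) ∧
      (∀ m n a b, (m, n) ≠ (a, b) →
        ∑ x, ∑ y,
          (((1 : ℝ) / (A m).card) * ∑ i ∈ A m, P i x) *
          (((1 : ℝ) / (B n).card) * ∑ j ∈ B n, Q j y) *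
          (((∑ i ∈ A a, ∑ j ∈ B b, D i j) * ρ x y).trace).re ≤ ε₂) := by
  classical
  set ε := min ε₁ (ε₂ / 4) with hεdef
  have hε0 : 0 < ε := lt_min hε₁.1 (by linarith [hε₂.1])
  have hε1 : ε < 1 := lt_of_le_of_lt (min_le_left _ _) hε₁.2
  have hεe1 : ε ≤ ε₁ := min_le_left _ _
  have hεe2 : ε ≤ ε₂ / 4 := min_le_right _ _
  obtain ⟨M', A, hAb, hAne, hAint⟩ := exists_id_family M ε lam hε0 hε1 hlam hcond
  obtain ⟨N', B, hBb, hBne, hBint⟩ := exists_id_family N ε lam hε0 hε1 hlam hcond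
  -- the elementary transmission probabilities
  set t : Fin M → Fin N → Fin M → Fin N → ℝ := fun i j a b =>
    ∑ x : X, ∑ y : Y, P i x * Q j y * ((D a b * ρ x y).trace).re with htdef
  have tnonneg : ∀ i j a b, 0 ≤ t i j a b := fun i j a b =>
    Finset.sum_nonneg fun x _ => Finset.sum_nonneg fun y _ =>
      mul_nonneg (mul_nonneg ((hP i).1 x) ((hQ j).1 y)) (re_trace_mul_nonneg (hD a b) (hρ x y).1)
  have tsum : ∀ i j, ∑ a, ∑ b, t i j a b = 1 := by
    intro i j
    have hr1 : ∀ (x : X) (y : Y), ∑ a, ∑ b, ((D a b * ρ x y).trace).re = 1 := by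
      intro x y
      rw [← trace_expand D (ρ x y) Finset.univ Finset.univ, hDsum, one_mul, (hρ x y).2]
      simp
    calc ∑ a, ∑ b, t i j a b
        = ∑ x : X, ∑ y : Y, ∑ a, ∑ b, P i x * Q j y * ((D a b * ρ x y).trace).re := by
          rw [htdef]
          rw [pull_out_sum (Finset.univ : Finset X)
            (fun (a : Fin M) (b : Fin N) (x : X) => ∑ y : Y, P i x * Q j y * ((D a b * ρ x y).trace).re)]
          refine Finset.sum_congr rfl fun x _ => ?_
          rw [pull_out_sum (Finset.univ : Finset Y)
            (fun (a : Fin M) (b : Fin N) (y : Y) => P i x * Q j y * ((D a b * ρ x y).trace).re)]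
      _ = ∑ x : X, ∑ y : Y, (P i x * Q j y) * ∑ a, ∑ b, ((D a b * ρ x y).trace).re := by
          refine Finset.sum_congr rfl fun x _ => Finset.sum_congr rfl fun y _ => ?_
          simp only [Finset.mul_sum, mul_assoc]
      _ = ∑ x : X, ∑ y : Y, P i x * Q j y := by
          refine Finset.sum_congr rfl fun x _ => Finset.sum_congr rfl fun y _ => ?_
          rw [hr1 x y, mul_one]
      _ = (∑ x : X, P i x) * (∑ y : Y, Q j y) := (Finset.sum_mul_sum _ _ _ _).symm
      _ = 1 := by rw [(hP i).2, (hQ j).2, mul_one]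
  refine ⟨M', N', A, B, hAb, hBb, hAne, hBne, ?_, ?_, ?_, ?_⟩
  · -- P' are probability distributions
    intro m
    have hc : (0:ℝ) < (A m).card := by exact_mod_cast Finset.card_pos.mpr (hAne m)
    refine ⟨fun x => mul_nonneg (by positivity) (Finset.sum_nonneg fun i _ => (hP i).1 x), ?_⟩
    rw [← Finset.mul_sum, Finset.sum_comm]
    have h2 : ∑ i ∈ A m, ∑ x : X, P i x = ((A m).card : ℝ) := by
      calc ∑ i ∈ A m, ∑ x : X, P i x = ∑ i ∈ A m, (1:ℝ) :=
            Finset.sum_congr rfl fun i _ => (hP i).2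
        _ = ((A m).card : ℝ) := by rw [Finset.sum_const]; simp
    rw [h2]
    field_simp
  · -- Q' are probability distributions
    intro n
    have hc : (0:ℝ) < (B n).card := by exact_mod_cast Finset.card_pos.mpr (hBne n)
    refine ⟨fun y => mul_nonneg (by positivity) (Finset.sum_nonneg fun j _ => (hQ j).1 y), ?_⟩
    rw [← Finset.mul_sum, Finset.sum_comm]
    have h2 : ∑ j ∈ B n, ∑ y : Y, Q j y = ((B n).card : ℝ) := by
      calc ∑ j ∈ B n, ∑ y : Y, Q j y = ∑ j ∈ B n, (1:ℝ) :=
            Finset.sum_congr rfl fun j _ => (hQ j).2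
        _ = ((B n).card : ℝ) := by rw [Finset.sum_const]; simp
    rw [h2]
    field_simp
  · -- first-kind error
    intro m n
    have hcA : (0:ℝ) < (A m).card := by exact_mod_cast Finset.card_pos.mpr (hAne m)
    have hcB : (0:ℝ) < (B n).card := by exact_mod_cast Finset.card_pos.mpr (hBne n)
    rw [expand_lemma]
    have hlow : ∀ i ∈ A m, ∀ j ∈ B n, 1 - ε ≤ ∑ a ∈ A m, ∑ b ∈ B n, t i j a b := by
      intro i hi j hj
      calc 1 - ε ≤ t i j i j := hgood i j
        _ ≤ ∑ b ∈ B n, t i j i b :=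
            Finset.single_le_sum (fun b _ => tnonneg i j i b) hj
        _ ≤ ∑ a ∈ A m, ∑ b ∈ B n, t i j a b :=
            Finset.single_le_sum
              (fun a _ => Finset.sum_nonneg fun b _ => tnonneg i j a b) hi
    have hT : ((A m).card : ℝ) * ((B n).card : ℝ) * (1 - ε)
        ≤ ∑ i ∈ A m, ∑ j ∈ B n, ∑ a ∈ A m, ∑ b ∈ B n, t i j a b := by
      calc ((A m).card : ℝ) * ((B n).card : ℝ) * (1 - ε)
          = ∑ i ∈ A m, ∑ j ∈ B n, (1 - ε) := by
            rw [Finset.sum_const, Finset.sum_const]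
            simp only [smul_eq_mul, nsmul_eq_mul]
            ring
        _ ≤ _ := Finset.sum_le_sum fun i hi => Finset.sum_le_sum fun j hj => hlow i hi j hj
    have h3 : (1/((A m).card : ℝ)) * ((1/((B n).card : ℝ)) *
        (((A m).card : ℝ) * ((B n).card : ℝ) * (1 - ε))) = 1 - ε := by
      field_simp
    have h4 : (1/((A m).card : ℝ)) * ((1/((B n).card : ℝ)) *
          (((A m).card : ℝ) * ((B n).card : ℝ) * (1 - ε)))
        ≤ (1/((A m).card : ℝ)) * ((1/((B n).card : ℝ)) *
          ∑ i ∈ A m, ∑ j ∈ B n, ∑ a ∈ A m, ∑ b ∈ B n, t i j a b) :=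
      mul_le_mul_of_nonneg_left (mul_le_mul_of_nonneg_left hT (by positivity)) (by positivity)
    linarith
  · -- second-kind error
    intro m n a b hne
    have hcA : (0:ℝ) < (A m).card := by exact_mod_cast Finset.card_pos.mpr (hAne m)
    have hcB : (0:ℝ) < (B n).card := by exact_mod_cast Finset.card_pos.mpr (hBne n)
    rw [expand_lemma]
    have hub : ∀ i j, ∑ a' ∈ A a, ∑ b' ∈ B b, t i j a' b'
        ≤ ε + (if i ∈ A a ∧ j ∈ B b then (1:ℝ) else 0) :=
      fun i j => sum_subset_bound (t i j) i j ε (tnonneg i j) (tsum i j) (hgood i j) (A a) (B b)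
    have hT : ∑ i ∈ A m, ∑ j ∈ B n, ∑ a' ∈ A a, ∑ b' ∈ B b, t i j a' b'
        ≤ ((A m).card : ℝ) * ((B n).card : ℝ) * ε
          + ((A m ∩ A a).card : ℝ) * ((B n ∩ B b).card : ℝ) := by
      calc ∑ i ∈ A m, ∑ j ∈ B n, ∑ a' ∈ A a, ∑ b' ∈ B b, t i j a' b'
          ≤ ∑ i ∈ A m, ∑ j ∈ B n, (ε + (if i ∈ A a ∧ j ∈ B b then (1:ℝ) else 0)) :=
            Finset.sum_le_sum fun i _ => Finset.sum_le_sum fun j _ => hub i j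
        _ = (∑ i ∈ A m, ∑ j ∈ B n, ε)
            + ∑ i ∈ A m, ∑ j ∈ B n, (if i ∈ A a ∧ j ∈ B b then (1:ℝ) else 0) := by
            simp only [Finset.sum_add_distrib]
        _ = ((A m).card : ℝ) * ((B n).card : ℝ) * ε
            + ((A m ∩ A a).card : ℝ) * ((B n ∩ B b).card : ℝ) := by
            rw [count_lemma]
            congr 1
            rw [Finset.sum_const, Finset.sum_const]
            simp only [smul_eq_mul, nsmul_eq_mul]
            ring
    have hXY : ((A m ∩ A a).card : ℝ) * ((B n ∩ B b).card : ℝ)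
        ≤ ε * (((A m).card : ℝ) * ((B n).card : ℝ)) := by
      have hor : m ≠ a ∨ n ≠ b := by
        by_contra h
        push_neg at h
        exact hne (by rw [h.1, h.2])
      have hY0 : (0:ℝ) ≤ ((B n ∩ B b).card : ℝ) := Nat.cast_nonneg _
      have hX0 : (0:ℝ) ≤ ((A m ∩ A a).card : ℝ) := Nat.cast_nonneg _
      rcases hor with h | h
      · have h1 : ((A m ∩ A a).card : ℝ) ≤ ε * ((A m).card : ℝ) := hAint m a h
        have h2 : ((B n ∩ B b).card : ℝ) ≤ ((B n).card : ℝ) := by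
          exact_mod_cast Finset.card_le_card (Finset.inter_subset_left)
        nlinarith
      · have h1 : ((A m ∩ A a).card : ℝ) ≤ ((A m).card : ℝ) := by
          exact_mod_cast Finset.card_le_card (Finset.inter_subset_left)
        have h2 : ((B n ∩ B b).card : ℝ) ≤ ε * ((B n).card : ℝ) := hBint n b h
        nlinarith
    have h5 : (1/((A m).card : ℝ)) * ((1/((B n).card : ℝ)) *
        (((A m).card : ℝ) * ((B n).card : ℝ) * ε
          + ε * (((A m).card : ℝ) * ((B n).card : ℝ)))) = 2 * ε := by
      field_simp
      ring
    have h6 : (1/((A m).card : ℝ)) * ((1/((B n).card : ℝ)) *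
          ∑ i ∈ A m, ∑ j ∈ B n, ∑ a' ∈ A a, ∑ b' ∈ B b, t i j a' b')
        ≤ (1/((A m).card : ℝ)) * ((1/((B n).card : ℝ)) *
          (((A m).card : ℝ) * ((B n).card : ℝ) * ε
            + ε * (((A m).card : ℝ) * ((B n).card : ℝ)))) :=
      mul_le_mul_of_nonneg_left (mul_le_mul_of_nonneg_left
        (hT.trans (add_le_add_right hXY _)) (by positivity)) (by positivity)
    linarith
end
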